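/- arXiv:2201.01951 — 5 statements merged into one kernel-verified Lean document; each statement's English description precedes it below -/
import Mathlib

section
/- Let U : ℝ^d → ℝ be C² with ∇U(0)=0, ‖D²U(x)‖ ≤ L for all x, and suppose there exist m > 0 and K ≥ 0 such that D²U(x)[y,y] ≥ m for all x with ‖x‖ ≥ K and all unit vectors y. Then for all x, y ∈ ℝ^d with ‖x‖ ∨ ‖y‖ ≥ K + 8KL/m, one has ⟨∇U(x) − ∇U(y), x − y⟩ ≥ (m/2)‖x − y‖². -/
open Real InnerProductSpace Set

set_option maxHeartbeats 1000000

lemma aux_key {d : ℕ} (U : EuclideanSpace ℝ (Fin d) → ℝ)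
    (L m K : ℝ) (hm : 0 < m) (hmL : m ≤ L) (hK : 0 ≤ K)
    (hU : ContDiff ℝ 2 U)
    (hHess : ∀ x, ‖iteratedFDeriv ℝ 2 U x‖ ≤ L)
    (hconv : ∀ x y : EuclideanSpace ℝ (Fin d), K ≤ ‖x‖ → ‖y‖ = 1 →
      m ≤ iteratedFDeriv ℝ 2 U x ![y, y])
    (x y : EuclideanSpace ℝ (Fin d)) (hx : K + 8 * K * L / m ≤ ‖x‖) :
    m / 2 * ‖x - y‖ ^ 2 ≤ (inner ℝ (gradient U x - gradient U y) (x - y) : ℝ) := by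
  set v := x - y with hv
  by_cases hv0 : v = 0
  · simp [← hv, hv0]
  have hvpos : (0:ℝ) < ‖v‖ := norm_pos_iff.2 hv0
  set γ : ℝ → EuclideanSpace ℝ (Fin d) := fun t => y + t • v with hγdef
  set g : ℝ → ℝ := fun t => fderiv ℝ U (γ t) v with hgdef
  have hF : ContDiff ℝ 1 (fderiv ℝ U) := hU.fderiv_right (by norm_num)
  have hγ : ∀ t : ℝ, HasDerivAt γ v t := by
    intro t
    simpa [hγdef] using ((hasDerivAt_id t).smul_const v).const_add y
  have hg : ∀ t : ℝ, HasDerivAt g (iteratedFDeriv ℝ 2 U (γ t) ![v, v]) t := by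
    intro t
    have h1 : HasFDerivAt (fderiv ℝ U) (fderiv ℝ (fderiv ℝ U) (γ t)) (γ t) :=
      (hF.differentiable one_ne_zero (γ t)).hasFDerivAt
    have h2 : HasDerivAt (fun s => fderiv ℝ U (γ s)) (fderiv ℝ (fderiv ℝ U) (γ t) v) t :=
      h1.comp_hasDerivAt t (hγ t)
    have h3 := h2.clm_apply (hasDerivAt_const t v)
    have h4 : iteratedFDeriv ℝ 2 U (γ t) ![v, v] = fderiv ℝ (fderiv ℝ U) (γ t) v v := by
      rw [iteratedFDeriv_two_apply]; simp
    rw [h4]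
    simpa using h3
  -- pointwise bounds on the second derivative along the segment
  have hlow : ∀ t : ℝ, -(L * ‖v‖ ^ 2) ≤ iteratedFDeriv ℝ 2 U (γ t) ![v, v] := by
    intro t
    have h1 : |iteratedFDeriv ℝ 2 U (γ t) ![v, v]| ≤ L * ‖v‖ ^ 2 := by
      have := (iteratedFDeriv ℝ 2 U (γ t)).le_opNorm ![v, v]
      have h2 : (∏ i : Fin 2, ‖(![v, v] : Fin 2 → EuclideanSpace ℝ (Fin d)) i‖) = ‖v‖ ^ 2 := by
        simp [Fin.prod_univ_two, sq]
      rw [Real.norm_eq_abs] at this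
      calc |iteratedFDeriv ℝ 2 U (γ t) ![v, v]| ≤
          ‖iteratedFDeriv ℝ 2 U (γ t)‖ * ∏ i : Fin 2, ‖(![v, v] : Fin 2 → _) i‖ := this
        _ ≤ L * ‖v‖ ^ 2 := by
            rw [h2]
            exact mul_le_mul_of_nonneg_right (hHess _) (by positivity)
    linarith [neg_abs_le (iteratedFDeriv ℝ 2 U (γ t) ![v, v])]
  have hhigh : ∀ t : ℝ, K ≤ ‖γ t‖ → m * ‖v‖ ^ 2 ≤ iteratedFDeriv ℝ 2 U (γ t) ![v, v] := by
    intro t ht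
    set u : EuclideanSpace ℝ (Fin d) := ‖v‖⁻¹ • v with hu
    have hunorm : ‖u‖ = 1 := by
      rw [hu, norm_smul]; simp [abs_of_pos hvpos, inv_mul_cancel₀ hvpos.ne']
    have hscale : iteratedFDeriv ℝ 2 U (γ t) ![v, v]
        = ‖v‖ ^ 2 * iteratedFDeriv ℝ 2 U (γ t) ![u, u] := by
      have hvu : (![v, v] : Fin 2 → EuclideanSpace ℝ (Fin d))
          = fun i => (fun _ : Fin 2 => ‖v‖) i • (![u, u] : Fin 2 → _) i := by
        funext i
        fin_cases i <;> simp [hu, smul_smul, mul_inv_cancel₀ hvpos.ne']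
      rw [hvu, ContinuousMultilinearMap.map_smul_univ]
      simp [Fin.prod_univ_two, sq, smul_eq_mul]
    rw [hscale]
    have := hconv (γ t) u ht hunorm
    nlinarith [sq_nonneg ‖v‖]
  -- g continuous, differentiable
  have hgc : Continuous g := by
    have : Differentiable ℝ g := fun t => (hg t).differentiableAt
    exact this.continuous
  have hder : ∀ t : ℝ, deriv g t = iteratedFDeriv ℝ 2 U (γ t) ![v, v] := fun t => (hg t).deriv
  -- mean value on subintervals
  have MVT : ∀ p q C : ℝ, p ≤ q → (∀ t ∈ Ioo p q, C ≤ iteratedFDeriv ℝ 2 U (γ t) ![v, v]) →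
      C * (q - p) ≤ g q - g p := by
    intro p q C hpq hb
    have := (convex_Icc p q).mul_sub_le_image_sub_of_le_deriv hgc.continuousOn
      (fun t _ => ((hg t).differentiableAt).differentiableWithinAt)
      (C := C) (fun t ht => by
        rw [interior_Icc] at ht
        rw [hder t]; exact hb t ht)
      p (left_mem_Icc.2 hpq) q (right_mem_Icc.2 hpq) hpq
    exact this
  -- relation between g and inner products of gradients
  have hinner : ∀ z : EuclideanSpace ℝ (Fin d), (inner ℝ (gradient U z) v : ℝ) = fderiv ℝ U z v := by
    intro z
    rw [gradient]
    rw [← InnerProductSpace.toDual_apply_apply, LinearIsometryEquiv.apply_symm_apply]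
  have hsum : (inner ℝ (gradient U x - gradient U y) v : ℝ) = g 1 - g 0 := by
    rw [inner_sub_left, hinner, hinner]
    have h0 : γ 0 = y := by simp [hγdef]
    have h1 : γ 1 = x := by simp [hγdef, hv]
    rw [hgdef]
    simp only [h0, h1]
  rw [hsum]
  -- norm lower bound along the segment: ‖γ t‖ ≥ ‖v‖ |t - c|
  obtain ⟨ip, hip⟩ : ∃ p : ℝ, (inner ℝ y v : ℝ) = p := ⟨_, rfl⟩
  set c : ℝ := -ip / ‖v‖ ^ 2 with hc
  have hv2pos : (0:ℝ) < ‖v‖ ^ 2 := by positivity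
  have hnormγ : ∀ t : ℝ, ‖v‖ * |t - c| ≤ ‖γ t‖ := by
    intro t
    have hexp : ‖γ t‖ ^ 2 = ‖y‖ ^ 2 + 2 * t * ip + t ^ 2 * ‖v‖ ^ 2 := by
      have h1 : ‖y + t • v‖ ^ 2 = ‖y‖ ^ 2 + 2 * (inner ℝ y (t • v) : ℝ) + ‖t • v‖ ^ 2 :=
        norm_add_sq_real y (t • v)
      rw [real_inner_smul_right, hip, norm_smul] at h1
      rw [hγdef]
      simp only
      rw [h1, mul_pow, Real.norm_eq_abs, sq_abs]
      ring
    have hcs : ip ^ 2 ≤ ‖y‖ ^ 2 * ‖v‖ ^ 2 := by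
      have h1 := abs_real_inner_le_norm y v
      rw [hip] at h1
      nlinarith [abs_nonneg ip, sq_abs ip, norm_nonneg y, norm_nonneg v]
    have hsq : (‖v‖ * |t - c|) ^ 2 ≤ ‖γ t‖ ^ 2 := by
      rw [mul_pow, sq_abs, hexp]
      have hid : ‖v‖ ^ 2 * (t - c) ^ 2 * ‖v‖ ^ 2 = (t * ‖v‖ ^ 2 + ip) ^ 2 := by
        rw [hc]; field_simp; ring
      nlinarith [hcs, hv2pos, hid]
    have h1 : 0 ≤ ‖v‖ * |t - c| := by positivity
    exact (pow_le_pow_iff_left₀ h1 (norm_nonneg (γ t)) (by norm_num)).mp hsq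
  -- Case split on size of ‖v‖
  by_cases hsmall : ‖v‖ ≤ 8 * K * L / m
  · -- whole segment is outside the ball of radius K
    have hseg : ∀ t ∈ Ioo (0:ℝ) 1, m * ‖v‖ ^ 2 ≤ iteratedFDeriv ℝ 2 U (γ t) ![v, v] := by
      intro t ht
      apply hhigh
      have hγx : ‖x - γ t‖ = (1 - t) * ‖v‖ := by
        have : x - γ t = (1 - t) • v := by
          rw [hγdef]; simp only; rw [hv]
          module
        rw [this, norm_smul, Real.norm_eq_abs, abs_of_nonneg (by linarith [ht.2])]
      have := norm_sub_norm_le x (γ t)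
      have h8 : (1 - t) * ‖v‖ ≤ 8 * K * L / m := by
        have h1t : (1:ℝ) - t ≤ 1 := by linarith [ht.1]
        have h2 : (1 - t) * ‖v‖ ≤ ‖v‖ := by
          simpa using mul_le_mul_of_nonneg_right h1t (norm_nonneg v)
        exact h2.trans hsmall
      rw [hγx] at this
      linarith
    have := MVT 0 1 (m * ‖v‖ ^ 2) (by norm_num) hseg
    nlinarith [sq_nonneg ‖v‖]
  · push_neg at hsmall
    set r : ℝ := K / ‖v‖ with hr
    have hrpos : 0 ≤ r := by positivity
    set a : ℝ := max 0 (min 1 (c - r)) with ha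
    set b : ℝ := max 0 (min 1 (c + r)) with hb
    have ha0 : 0 ≤ a := le_max_left _ _
    have ha1 : a ≤ 1 := by
      rw [ha]; rcases le_total (min 1 (c - r)) 0 with h | h
      · simpa [max_eq_left h] using h.trans zero_le_one
      · rw [max_eq_right h]; exact min_le_left _ _
    have hb1 : b ≤ 1 := by
      rw [hb]; rcases le_total (min 1 (c + r)) 0 with h | h
      · simpa [max_eq_left h] using h.trans zero_le_one
      · rw [max_eq_right h]; exact min_le_left _ _
    have hab : a ≤ b := by
      rw [ha, hb]
      apply max_le_max le_rfl
      apply min_le_min le_rfl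
      linarith
    have hba : b - a ≤ 2 * r := by
      rw [ha, hb, max_def, max_def, min_def, min_def]
      split_ifs <;> linarith
    -- outside the clamp, the segment is outside the ball
    have hout : ∀ t : ℝ, r ≤ |t - c| → K ≤ ‖γ t‖ := by
      intro t h
      have := hnormγ t
      have : ‖v‖ * r ≤ ‖γ t‖ := le_trans (mul_le_mul_of_nonneg_left h (norm_nonneg v)) this
      rw [hr] at this
      rw [mul_div_cancel₀ _ hvpos.ne'] at this
      exact this
    have hleft : m * ‖v‖ ^ 2 * (a - 0) ≤ g a - g 0 := by
      apply MVT 0 a _ ha0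
      intro t ht
      apply hhigh
      apply hout
      have hapos : 0 < a := ht.1.trans ht.2
      have hmin : 0 < min 1 (c - r) := by
        by_contra h
        push_neg at h
        rw [ha, max_eq_left h] at hapos
        exact lt_irrefl _ hapos
      have : a ≤ c - r := by
        rw [ha, max_eq_right hmin.le]
        exact min_le_right _ _
      have : t < c - r := lt_of_lt_of_le ht.2 this
      rw [abs_sub_comm, abs_of_nonneg (by linarith)]
      linarith
    have hright : m * ‖v‖ ^ 2 * (1 - b) ≤ g 1 - g b := by
      apply MVT b 1 _ hb1
      intro t ht
      apply hhigh
      apply hout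
      have hblt : b < 1 := lt_of_le_of_lt (le_of_lt ht.1) ht.2
      have hmlt : min 1 (c + r) < 1 := by
        by_contra h
        push_neg at h
        have : min 1 (c + r) = 1 := le_antisymm (min_le_left _ _) h
        rw [hb, this] at hblt
        simp at hblt
      have haux : c + r ≤ b := by
        rw [hb]
        have : min 1 (c + r) = c + r := by
          rcases min_cases 1 (c + r) with ⟨h1, h2⟩ | ⟨h1, h2⟩
          · exfalso; rw [h1] at hmlt; exact lt_irrefl _ hmlt
          · exact h1
        rw [this]
        exact le_max_right _ _
      have : c + r < t := lt_of_le_of_lt haux ht.1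
      rw [abs_of_nonneg (by linarith)]
      linarith
    have hmid : -(L * ‖v‖ ^ 2) * (b - a) ≤ g b - g a := by
      apply MVT a b _ hab
      intro t _
      exact hlow t
    -- combine
    have hrK : r * ‖v‖ = K := by rw [hr]; field_simp
    have hcomb : g 1 - g 0 ≥ m * ‖v‖ ^ 2 * (a + (1 - b)) - L * ‖v‖ ^ 2 * (b - a) := by
      have := hleft
      have := hright
      have := hmid
      nlinarith
    have hKle : 8 * K * L / m < ‖v‖ := hsmall
    have hKL : 8 * K * L < m * ‖v‖ := by
      rw [div_lt_iff₀ hm] at hKle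
      linarith
    have hfin : m * ‖v‖ ^ 2 * (a + (1 - b)) - L * ‖v‖ ^ 2 * (b - a) ≥ m / 2 * ‖v‖ ^ 2 := by
      have h2r : b - a ≤ 2 * r := hba
      have hge : 1 - 2 * r ≤ a + (1 - b) := by linarith
      have hLpos : 0 < L := lt_of_lt_of_le hm hmL
      have e1 : m * ‖v‖ ^ 2 * (1 - 2 * r) ≤ m * ‖v‖ ^ 2 * (a + (1 - b)) :=
        mul_le_mul_of_nonneg_left hge (by positivity)
      have e2 : L * ‖v‖ ^ 2 * (b - a) ≤ L * ‖v‖ ^ 2 * (2 * r) :=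
        mul_le_mul_of_nonneg_left h2r (by positivity)
      have e3 : r * ‖v‖ ^ 2 = K * ‖v‖ := by rw [sq, ← mul_assoc, hrK]
      have e5 : m * (r * ‖v‖ ^ 2) = m * (K * ‖v‖) := by rw [e3]
      have e6 : L * (r * ‖v‖ ^ 2) = L * (K * ‖v‖) := by rw [e3]
      have e7 : m * (K * ‖v‖) ≤ L * (K * ‖v‖) :=
        mul_le_mul_of_nonneg_right hmL (by positivity)
      have e4 : 8 * K * L * ‖v‖ ≤ m * ‖v‖ * ‖v‖ :=
        mul_le_mul_of_nonneg_right hKL.le (norm_nonneg v)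
      nlinarith [e1, e2, e4, e5, e6, e7]
    linarith

/-- Under a `C²` potential with `∇U(0)=0`, Hessian bounded by `L`, and Hessian quadratic
form bounded below by `m` outside the ball of radius `K`, the potential satisfies the
strong convexity at infinity bound
`⟨∇U(x) − ∇U(y), x − y⟩ ≥ (m/2)‖x − y‖²` whenever `max(‖x‖, ‖y‖) ≥ K + 8KL/m`. -/
theorem strong_convexity_at_infinity {d : ℕ} (U : EuclideanSpace ℝ (Fin d) → ℝ)
    (L m K : ℝ) (hm : 0 < m) (hmL : m ≤ L) (hK : 0 ≤ K)
    (hU : ContDiff ℝ 2 U) (hgrad0 : gradient U 0 = 0)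
    (hHess : ∀ x, ‖iteratedFDeriv ℝ 2 U x‖ ≤ L)
    (hconv : ∀ x y : EuclideanSpace ℝ (Fin d), K ≤ ‖x‖ → ‖y‖ = 1 →
      m ≤ iteratedFDeriv ℝ 2 U x ![y, y]) :
    ∀ x y : EuclideanSpace ℝ (Fin d), K + 8 * K * L / m ≤ max ‖x‖ ‖y‖ →
      m / 2 * ‖x - y‖ ^ 2 ≤ (inner ℝ (gradient U x - gradient U y) (x - y) : ℝ) := by
  intro x y hmax
  rcases le_total ‖y‖ ‖x‖ with h | h
  · exact aux_key U L m K hm hmL hK hU hHess hconv x y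
      (by rwa [max_eq_left h] at hmax)
  · have h2 := aux_key U L m K hm hmL hK hU hHess hconv y x
      (by rwa [max_eq_right h] at hmax)
    have e1 : ‖x - y‖ = ‖y - x‖ := norm_sub_rev x y
    have e2 : (inner ℝ (gradient U x - gradient U y) (x - y) : ℝ) =
        inner ℝ (gradient U y - gradient U x) (y - x) := by
      rw [show gradient U x - gradient U y = -(gradient U y - gradient U x) from (neg_sub _ _).symm,
        show x - y = -(y - x) from (neg_sub _ _).symm, inner_neg_neg]
    rw [e1, e2]
    exact h2
end

section
/- Let U : ℝ^d → ℝ be C² with ∇U(0)=0 and ‖D²U(x)‖ ≤ L for all x, and suppose there exist m > 0 and K ≥ 0 such that D²U(x)[y,y] ≥ m for all ‖x‖ ≥ K and all unit vectors y. Set K̃ = 2K(1 + L/m). Then for every x with ‖x‖ ≥ K̃, ⟨∇U(x), x⟩ ≥ (m/2)‖x‖². -/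
open Real

/-- Quadratic growth of `⟨∇U(x), x⟩` outside a ball: if `U` is `C²`, `∇U(0)=0`,
`‖D²U‖ ≤ L` and the Hessian quadratic form is `≥ m` outside `B(0,K)`, then for
`‖x‖ ≥ K̃ = 2K(1 + L/m)` one has `⟨∇U(x), x⟩ ≥ (m/2)‖x‖²`. -/
theorem inner_grad_quadratic_growth {d : ℕ} (U : EuclideanSpace ℝ (Fin d) → ℝ)
    (L m K : ℝ) (hm : 0 < m) (hK : 0 ≤ K)
    (hU : ContDiff ℝ 2 U) (hgrad0 : gradient U 0 = 0)
    (hHess : ∀ x, ‖iteratedFDeriv ℝ 2 U x‖ ≤ L)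
    (hconv : ∀ x y : EuclideanSpace ℝ (Fin d), K ≤ ‖x‖ → ‖y‖ = 1 →
      m ≤ iteratedFDeriv ℝ 2 U x ![y, y]) :
    ∀ x : EuclideanSpace ℝ (Fin d), 2 * K * (1 + L / m) ≤ ‖x‖ →
      m / 2 * ‖x‖ ^ 2 ≤ (inner ℝ (gradient U x) x : ℝ) := by
  intro x hx
  have hL : 0 ≤ L := le_trans (norm_nonneg _) (hHess 0)
  rcases eq_or_ne x 0 with rfl | hx0
  · simp [hgrad0]
  have hxpos : 0 < ‖x‖ := norm_pos_iff.mpr hx0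
  have hKx : K ≤ ‖x‖ := by
    have h1 : 0 ≤ L / m := div_nonneg hL hm.le
    nlinarith
  set y : EuclideanSpace ℝ (Fin d) := ‖x‖⁻¹ • x with hy
  have hy1 : ‖y‖ = 1 := norm_smul_inv_norm hx0
  have hinner : ∀ z : EuclideanSpace ℝ (Fin d), (inner ℝ (gradient U z) x : ℝ) = fderiv ℝ U z x :=
    fun z => InnerProductSpace.toDual_symm_apply
  have hU1 : ContDiff ℝ 1 (fderiv ℝ U) := hU.fderiv_right (by norm_num)
  set G : ℝ → ℝ := fun t => iteratedFDeriv ℝ 2 U (t • x) ![x, x] with hG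
  -- derivative of g t = fderiv U (t•x) x
  have hderiv : ∀ t : ℝ, HasDerivAt (fun s : ℝ => fderiv ℝ U (s • x) x) (G t) t := by
    intro t
    have hline : HasDerivAt (fun s : ℝ => s • x) x t := by
      simpa using (hasDerivAt_id t).smul_const x
    have hf : HasFDerivAt (fderiv ℝ U) (fderiv ℝ (fderiv ℝ U) (t • x)) (t • x) :=
      (hU1.differentiable one_ne_zero (t • x)).hasFDerivAt
    have h1 : HasDerivAt (fun s : ℝ => fderiv ℝ U (s • x))
        (fderiv ℝ (fderiv ℝ U) (t • x) x) t := hf.comp_hasDerivAt t hline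
    have h2 := h1.clm_apply (hasDerivAt_const t x)
    simpa [hG, iteratedFDeriv_two_apply] using h2
  have hcont : Continuous G := by
    have h1 : Continuous (fderiv ℝ (fderiv ℝ U)) := hU1.continuous_fderiv one_ne_zero
    have h2 : Continuous (fun t : ℝ => fderiv ℝ (fderiv ℝ U) (t • x)) :=
      h1.comp (continuous_id.smul continuous_const)
    have : Continuous (fun t : ℝ => fderiv ℝ (fderiv ℝ U) (t • x) x x) :=
      (h2.clm_apply continuous_const).clm_apply continuous_const
    simpa [hG, iteratedFDeriv_two_apply] using this
  have hzero : fderiv ℝ U 0 x = 0 := by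
    have := hinner 0
    rw [hgrad0] at this
    simpa using this.symm
  have hFTC : fderiv ℝ U x x - fderiv ℝ U 0 x = ∫ t in (0:ℝ)..1, G t := by
    have := intervalIntegral.integral_eq_sub_of_hasDerivAt
      (f := fun s : ℝ => fderiv ℝ U (s • x) x) (f' := G)
      (fun t _ => hderiv t) (hcont.intervalIntegrable 0 1)
    simpa using this.symm
  set t₀ : ℝ := K / ‖x‖ with ht₀
  have ht₀0 : 0 ≤ t₀ := div_nonneg hK hxpos.le
  have ht₀1 : t₀ ≤ 1 := (div_le_one hxpos).mpr hKx
  have ht₀x : t₀ * ‖x‖ = K := div_mul_cancel₀ K hxpos.ne'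
  -- pointwise bounds
  have habs : ∀ t : ℝ, -(L * ‖x‖ ^ 2) ≤ G t := by
    intro t
    have h1 : ‖G t‖ ≤ ‖iteratedFDeriv ℝ 2 U (t • x)‖ * ∏ i, ‖(![x, x]) i‖ :=
      (iteratedFDeriv ℝ 2 U (t • x)).le_opNorm _
    have h2 : (∏ i, ‖(![x, x] : Fin 2 → EuclideanSpace ℝ (Fin d)) i‖) = ‖x‖ ^ 2 := by
      simp [Fin.prod_univ_two]; ring
    rw [h2] at h1
    have h3 : ‖G t‖ ≤ L * ‖x‖ ^ 2 :=
      h1.trans (by nlinarith [hHess (t • x), norm_nonneg x, sq_nonneg ‖x‖])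
    have := abs_le.mp (by simpa [Real.norm_eq_abs] using h3)
    linarith [this.1]
  have hlow : ∀ t ∈ Set.Icc t₀ 1, m * ‖x‖ ^ 2 ≤ G t := by
    intro t ht
    have htnn : 0 ≤ t := le_trans ht₀0 ht.1
    have hnorm : K ≤ ‖t • x‖ := by
      rw [norm_smul, Real.norm_eq_abs, abs_of_nonneg htnn]
      calc K = t₀ * ‖x‖ := ht₀x.symm
        _ ≤ t * ‖x‖ := by nlinarith [ht.1]
    have hc := hconv (t • x) y hnorm hy1
    have hxy : (![x, x] : Fin 2 → EuclideanSpace ℝ (Fin d)) = fun i => ‖x‖ • (![y, y] i) := by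
      funext i
      fin_cases i <;> simp [hy, smul_smul, mul_inv_cancel₀ hxpos.ne']
    have hsmul : G t = ‖x‖ ^ 2 * iteratedFDeriv ℝ 2 U (t • x) ![y, y] := by
      rw [hG]
      simp only [hxy]
      rw [(iteratedFDeriv ℝ 2 U (t • x)).map_smul_univ (fun _ => ‖x‖) ![y, y]]
      simp [Fin.prod_univ_two, sq]
    rw [hsmul]
    nlinarith [sq_nonneg ‖x‖, hxpos]
  -- combine
  have hint : ∫ t in (0:ℝ)..1, G t =
      (∫ t in (0:ℝ)..t₀, G t) + ∫ t in t₀..(1:ℝ), G t :=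
    (intervalIntegral.integral_add_adjacent_intervals
      (hcont.intervalIntegrable 0 t₀) (hcont.intervalIntegrable t₀ 1)).symm
  have hI1 : -(L * (t₀ * ‖x‖ ^ 2)) ≤ ∫ t in (0:ℝ)..t₀, G t := by
    have := intervalIntegral.integral_mono_on (μ := MeasureTheory.volume) ht₀0
      (intervalIntegrable_const (c := -(L * ‖x‖ ^ 2)))
      (hcont.intervalIntegrable 0 t₀) (fun t _ => habs t)
    simpa using this
  have hI2 : m * ((1 - t₀) * ‖x‖ ^ 2) ≤ ∫ t in t₀..(1:ℝ), G t := by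
    have := intervalIntegral.integral_mono_on (μ := MeasureTheory.volume) ht₀1
      (intervalIntegrable_const (c := m * ‖x‖ ^ 2))
      (hcont.intervalIntegrable t₀ 1) hlow
    simpa [smul_eq_mul] using this
  rw [hinner x]
  have hsum : fderiv ℝ U x x = ∫ t in (0:ℝ)..1, G t := by
    rw [← hFTC, hzero]; ring
  rw [hsum, hint]
  have hxm : 2 * K * (m + L) ≤ m * ‖x‖ := by
    have h := mul_le_mul_of_nonneg_left hx hm.le
    calc 2 * K * (m + L) = m * (2 * K * (1 + L / m)) := by field_simp
      _ ≤ m * ‖x‖ := h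
  have hfin : m / 2 * ‖x‖ ^ 2 ≤ -(t₀ * (L * ‖x‖ ^ 2)) + (1 - t₀) * (m * ‖x‖ ^ 2) := by
    have e1 : t₀ * (L * ‖x‖ ^ 2) + t₀ * (m * ‖x‖ ^ 2) = K * (m + L) * ‖x‖ := by
      rw [← ht₀x]; ring
    have e2 : 2 * K * (m + L) * ‖x‖ ≤ m * ‖x‖ * ‖x‖ :=
      mul_le_mul_of_nonneg_right hxm hxpos.le
    have e3 : ‖x‖ ^ 2 = ‖x‖ * ‖x‖ := sq ‖x‖
    linarith [e1, e2, e3]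
  linarith [hI1, hI2]
end

section
/- Let β ∈ [0,1). Assume U : ℝ^d → ℝ is C² with ∇U(0)=0, sup_x ‖D²U(x)‖ ≤ L, and there exist m_β > 0, L_β, K_β ≥ 0 such that for all ‖x‖ ≥ K_β and unit y, m_β/(1+‖x‖^β) ≤ D²U(x)[y,y] ≤ L_β/(1+‖x‖^{3β/4}). Then with K̃_β = max{4K_β(1+L/m_β), (4K_β(1+L/m_β))^{1/(1−β)}}, for all x with ‖x‖ ≥ K̃_β one has ⟨∇U(x), x⟩ ≥ (m_β/2)‖x‖²/(1+‖x‖^β). -/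
open Real MeasureTheory

set_option maxHeartbeats 1000000

/-- Sub-quadratic growth of `⟨∇U(x), x⟩` under the `β`-tail condition: if the Hessian
quadratic form on unit vectors lies between `m_β/(1+‖x‖^β)` and `L_β/(1+‖x‖^{3β/4})`
outside `B(0,K_β)`, then for `‖x‖ ≥ K̃_β = max(4K_β(1+L/m_β), (4K_β(1+L/m_β))^{1/(1−β)})`
one has `⟨∇U(x), x⟩ ≥ (m_β/2)‖x‖²/(1+‖x‖^β)`. -/
theorem inner_grad_growth_beta {d : ℕ} (U : EuclideanSpace ℝ (Fin d) → ℝ)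
    (β L mβ Lβ Kβ : ℝ) (hβ : β ∈ Set.Ico (0:ℝ) 1) (hmβ : 0 < mβ)
    (hLβ : 0 ≤ Lβ) (hKβ : 0 ≤ Kβ)
    (hU : ContDiff ℝ 2 U) (hgrad0 : gradient U 0 = 0)
    (hHess : ∀ x, ‖iteratedFDeriv ℝ 2 U x‖ ≤ L)
    (hlow : ∀ x y : EuclideanSpace ℝ (Fin d), Kβ ≤ ‖x‖ → ‖y‖ = 1 →
      mβ / (1 + ‖x‖ ^ β) ≤ iteratedFDeriv ℝ 2 U x ![y, y])
    (hup : ∀ x y : EuclideanSpace ℝ (Fin d), Kβ ≤ ‖x‖ → ‖y‖ = 1 →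
      iteratedFDeriv ℝ 2 U x ![y, y] ≤ Lβ / (1 + ‖x‖ ^ (3 * β / 4))) :
    ∀ x : EuclideanSpace ℝ (Fin d),
      max (4 * Kβ * (1 + L / mβ)) ((4 * Kβ * (1 + L / mβ)) ^ (1 / (1 - β))) ≤ ‖x‖ →
      mβ / 2 * ‖x‖ ^ 2 / (1 + ‖x‖ ^ β) ≤ (inner ℝ (gradient U x) x : ℝ) := by
  intro x hx
  obtain ⟨hβ0, hβ1⟩ := hβ
  have hL0 : 0 ≤ L := le_trans (norm_nonneg _) (hHess 0)
  rcases eq_or_lt_of_le (norm_nonneg x) with h0 | hRpos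
  · have hx0 : x = 0 := norm_eq_zero.mp h0.symm
    simp [hx0]
  set R := ‖x‖ with hRdef
  have hRne : R ≠ 0 := ne_of_gt hRpos
  have hC : 4 * Kβ * (1 + L / mβ) ≤ R := le_trans (le_max_left _ _) hx
  have hC' : (4 * Kβ * (1 + L / mβ)) ^ (1 / (1 - β)) ≤ R := le_trans (le_max_right _ _) hx
  have hCnonneg : 0 ≤ 4 * Kβ * (1 + L / mβ) := by positivity
  -- R^{1-β} ≥ C
  have hpow : 4 * Kβ * (1 + L / mβ) ≤ R ^ (1 - β) := by
    set C := 4 * Kβ * (1 + L / mβ) with hCdef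
    rcases le_or_gt C 1 with hC1 | hC1
    · rcases le_or_gt 1 R with hR1 | hR1
      · calc C ≤ 1 := hC1
          _ = R ^ (0:ℝ) := (Real.rpow_zero R).symm
          _ ≤ R ^ (1 - β) := Real.rpow_le_rpow_of_exponent_le hR1 (by linarith)
      · calc C ≤ R := hC
          _ = R ^ (1:ℝ) := (Real.rpow_one R).symm
          _ ≤ R ^ (1 - β) := Real.rpow_le_rpow_of_exponent_ge hRpos hR1.le (by linarith)
    · calc C = (C ^ ((1:ℝ) / (1 - β))) ^ (1 - β) := by
            rw [← Real.rpow_mul hCnonneg, one_div,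
              inv_mul_cancel₀ (by linarith : (1:ℝ) - β ≠ 0), Real.rpow_one]
        _ ≤ R ^ (1 - β) := Real.rpow_le_rpow (Real.rpow_nonneg hCnonneg _) hC' (by linarith)
  -- basics about s
  set s : ℝ := Kβ / R with hsdef
  have hs0 : 0 ≤ s := div_nonneg hKβ hRpos.le
  have hsR : s * R = Kβ := div_mul_cancel₀ _ hRne
  have h4K : 4 * Kβ ≤ R := by nlinarith [div_nonneg hL0 hmβ.le]
  have hs14 : s ≤ 1 / 4 := by rw [hsdef, div_le_div_iff₀ hRpos (by norm_num)]; linarith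
  have hs1 : s ≤ 1 := by linarith
  -- the unit vector
  set y : EuclideanSpace ℝ (Fin d) := R⁻¹ • x with hydef
  have hxne : x ≠ 0 := fun h => hRne (by rw [hRdef, h, norm_zero])
  have hy : ‖y‖ = 1 := by rw [hydef, hRdef]; exact norm_smul_inv_norm hxne
  have hx_eq : x = R • y := by rw [hydef, smul_smul, mul_inv_cancel₀ hRne, one_smul]
  -- derivative setup
  set B : ℝ → ℝ := fun t => iteratedFDeriv ℝ 2 U (t • x) ![x, x] with hBdef
  have hg : ∀ t : ℝ, HasDerivAt (fun τ : ℝ => fderiv ℝ U (τ • x) x) (B t) t := by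
    intro t
    have hF : ContDiff ℝ 1 (fderiv ℝ U) := hU.fderiv_right (by norm_num)
    have h1 : HasDerivAt (fun τ : ℝ => τ • x) x t := by
      simpa using (hasDerivAt_id t).smul_const x
    have h2 := ((hF.differentiable (by norm_num) (t • x)).hasFDerivAt).comp_hasDerivAt t h1
    have h3 := (ContinuousLinearMap.apply ℝ ℝ x).hasFDerivAt.comp_hasDerivAt t h2
    refine h3.congr_deriv ?_
    symm
    show iteratedFDeriv ℝ 2 U (t • x) ![x, x] = _
    rw [iteratedFDeriv_two_apply]
    simp
  have hBc : Continuous B := by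
    have h1 : Continuous fun t : ℝ => iteratedFDeriv ℝ 2 U (t • x) :=
      (hU.continuous_iteratedFDeriv le_rfl).comp (continuous_id.smul continuous_const)
    exact (ContinuousMultilinearMap.apply ℝ _ ℝ ![x, x]).continuous.comp h1
  have hint1 : IntervalIntegrable B volume 0 s := hBc.intervalIntegrable _ _
  have hint2 : IntervalIntegrable B volume s 1 := hBc.intervalIntegrable _ _
  have hint01 : IntervalIntegrable B volume 0 1 := hBc.intervalIntegrable _ _
  -- FTC
  have hFTC : ∫ t in (0:ℝ)..1, B t = fderiv ℝ U x x - fderiv ℝ U 0 x := by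
    have := intervalIntegral.integral_eq_sub_of_hasDerivAt (f := fun τ : ℝ => fderiv ℝ U (τ • x) x)
      (fun t _ => hg t) hint01
    simpa using this
  have hzero : fderiv ℝ U 0 x = 0 := by
    have h : (inner ℝ (gradient U 0) x : ℝ) = fderiv ℝ U 0 x :=
      InnerProductSpace.toDual_symm_apply
    rw [← h, hgrad0, inner_zero_left]
  have hinner : (inner ℝ (gradient U x) x : ℝ) = fderiv ℝ U x x :=
    InnerProductSpace.toDual_symm_apply
  -- pointwise bounds
  have hBlow1 : ∀ t ∈ Set.Icc (0:ℝ) s, -(L * R ^ 2) ≤ B t := by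
    intro t _
    have h := (iteratedFDeriv ℝ 2 U (t • x)).le_opNorm ![x, x]
    have hprod : (∏ i, ‖(![x, x] : Fin 2 → EuclideanSpace ℝ (Fin d)) i‖) = R * R := by
      simp [Fin.prod_univ_two, hRdef]
    rw [hprod] at h
    have h2 : ‖B t‖ ≤ L * (R * R) := le_trans h
      (mul_le_mul_of_nonneg_right (hHess _) (by positivity))
    have := neg_abs_le (B t)
    rw [Real.norm_eq_abs] at h2
    nlinarith [abs_nonneg (B t)]
  have hBlow2 : ∀ t ∈ Set.Icc s 1, mβ * R ^ 2 / (1 + R ^ β) ≤ B t := by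
    intro t ht
    have ht0 : 0 ≤ t := le_trans hs0 ht.1
    have htx : ‖t • x‖ = t * R := by rw [norm_smul, Real.norm_eq_abs, abs_of_nonneg ht0]
    have htxK : Kβ ≤ ‖t • x‖ := by
      rw [htx, ← hsR]; exact mul_le_mul_of_nonneg_right ht.1 hRpos.le
    have hl := hlow (t • x) y htxK hy
    have hxy : B t = R ^ 2 * iteratedFDeriv ℝ 2 U (t • x) ![y, y] := by
      have hm := (iteratedFDeriv ℝ 2 U (t • x)).map_smul_univ (fun _ : Fin 2 => R) ![y, y]
      have harg : (![x, x] : Fin 2 → EuclideanSpace ℝ (Fin d)) =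
          fun i => R • (![y, y] : Fin 2 → EuclideanSpace ℝ (Fin d)) i := by
        funext i; fin_cases i <;> simp [hx_eq]
      rw [hBdef]
      simp only [harg, hm, Fin.prod_univ_two, smul_eq_mul]
      ring
    have htxR : ‖t • x‖ ≤ R := by rw [htx]; nlinarith [ht.2]
    calc mβ * R ^ 2 / (1 + R ^ β) = R ^ 2 * (mβ / (1 + R ^ β)) := by ring
      _ ≤ R ^ 2 * (mβ / (1 + ‖t • x‖ ^ β)) := by
          have hd1 : (0:ℝ) < 1 + ‖t • x‖ ^ β := by
            have := Real.rpow_nonneg (norm_nonneg (t • x)) β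
            linarith
          have hd2 : 1 + ‖t • x‖ ^ β ≤ 1 + R ^ β := by
            have := Real.rpow_le_rpow (norm_nonneg (t • x)) htxR hβ0
            linarith
          exact mul_le_mul_of_nonneg_left
            (div_le_div_of_nonneg_left hmβ.le hd1 hd2) (sq_nonneg R)
      _ ≤ R ^ 2 * iteratedFDeriv ℝ 2 U (t • x) ![y, y] := by
          exact mul_le_mul_of_nonneg_left hl (by positivity)
      _ = B t := hxy.symm
  -- integral bounds
  have hI1 : s * (-(L * R ^ 2)) ≤ ∫ t in (0:ℝ)..s, B t := by
    have := intervalIntegral.integral_mono_on hs0 (intervalIntegrable_const) hint1 hBlow1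
    rw [intervalIntegral.integral_const] at this
    simpa using this
  have hI2 : (1 - s) * (mβ * R ^ 2 / (1 + R ^ β)) ≤ ∫ t in s..(1:ℝ), B t := by
    have := intervalIntegral.integral_mono_on hs1 (intervalIntegrable_const) hint2 hBlow2
    rw [intervalIntegral.integral_const] at this
    simpa using this
  have hsplit : (∫ t in (0:ℝ)..s, B t) + ∫ t in s..(1:ℝ), B t = ∫ t in (0:ℝ)..1, B t :=
    intervalIntegral.integral_add_adjacent_intervals hint1 hint2
  -- final arithmetic
  have hP : (0:ℝ) ≤ R ^ β := Real.rpow_nonneg hRpos.le β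
  have hD : (0:ℝ) < 1 + R ^ β := by linarith
  have hQdef : R ^ (β - 1) * R ^ (1 - β) = 1 := by
    rw [← Real.rpow_add hRpos]; norm_num
  have hQ0 : 0 ≤ R ^ (β - 1) := Real.rpow_nonneg hRpos.le _
  have hQR : R ^ (β - 1) * R = R ^ β := by
    nth_rewrite 2 [← Real.rpow_one R]
    rw [← Real.rpow_add hRpos]
    norm_num
  have h1' : (mβ + L) * Kβ ≤ mβ / 4 * R := by
    have : mβ / 4 * (4 * Kβ * (1 + L / mβ)) = (mβ + L) * Kβ := by field_simp
    nlinarith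
  have h2' : L * Kβ * R ^ (β - 1) ≤ mβ / 4 := by
    have h4LK : 4 * L * Kβ ≤ mβ * R ^ (1 - β) := by
      have : mβ * (4 * Kβ * (1 + L / mβ)) = 4 * Kβ * (mβ + L) := by field_simp
      nlinarith [Real.rpow_nonneg hRpos.le (1 - β)]
    nlinarith [mul_le_mul_of_nonneg_right h4LK hQ0]
  have key : mβ / 2 * R ^ 2 / (1 + R ^ β) ≤
      s * (-(L * R ^ 2)) + (1 - s) * (mβ * R ^ 2 / (1 + R ^ β)) := by
    have hsR2 : s * R ^ 2 = Kβ * R := by rw [← hsR]; ring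
    have hterm : s * R ^ 2 * R ^ β = Kβ * R ^ (β - 1) * R ^ 2 := by
      calc s * R ^ 2 * R ^ β = (s * R) * (R * R ^ β) := by ring
        _ = Kβ * (R * (R ^ (β - 1) * R)) := by rw [hsR, hQR]
        _ = Kβ * R ^ (β - 1) * R ^ 2 := by ring
    have hA : L * (s * R ^ 2) = L * (Kβ * R) := by rw [hsR2]
    have hB : mβ * (s * R ^ 2) = mβ * (Kβ * R) := by rw [hsR2]
    have hC2 : L * (s * R ^ 2 * R ^ β) = L * (Kβ * R ^ (β - 1) * R ^ 2) := by rw [hterm]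
    have expand : (s * (-(L * R ^ 2)) + (1 - s) * (mβ * R ^ 2 / (1 + R ^ β))) * (1 + R ^ β)
        = -(L * (s * R ^ 2)) - L * (s * R ^ 2 * R ^ β) + mβ * R ^ 2 - mβ * (s * R ^ 2) := by
      field_simp
      ring
    rw [div_le_iff₀ hD, expand]
    linarith [hA, hB, hC2, mul_le_mul_of_nonneg_right h1' hRpos.le,
      mul_le_mul_of_nonneg_right h2' (sq_nonneg R)]
  rw [hinner, ← sub_zero (fderiv ℝ U x x), ← hzero, ← hFTC, ← hsplit]
  calc mβ / 2 * R ^ 2 / (1 + R ^ β)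
      ≤ s * (-(L * R ^ 2)) + (1 - s) * (mβ * R ^ 2 / (1 + R ^ β)) := key
    _ ≤ (∫ t in (0:ℝ)..s, B t) + ∫ t in s..(1:ℝ), B t := add_le_add hI1 hI2
end

section
/- Let U : ℝ^d → ℝ be C² with ∇U(0)=0, sup ‖D²U‖ ≤ L, and D²U(x)[y,y] ≥ m > 0 for ‖x‖ ≥ K and unit y. Set η̄ = m/16, K̃ = 2K(1+L/m). For any γ̄ ∈ (0, m/(4L²)], γ ∈ (0, γ̄], and x with ‖x‖ ≥ max(K̃, 4√(d/m)), the one-step ULA kernel Q_γ satisfies Q_γ V_η̄(x) ≤ exp(−η̄ m γ ‖x‖²/4) V_η̄(x), where V_η̄(x) = exp(η̄‖x‖²) and Q_γ f(x) = E[f(x − γ∇U(x) + √(2γ) Z)] with Z standard Gaussian. -/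
open MeasureTheory ProbabilityTheory Real
open scoped NNReal ENNReal

/-- The standard Gaussian distribution `N(0, I_d)` on `ℝ^d`. -/
noncomputable def stdGaussian (d : ℕ) : Measure (EuclideanSpace ℝ (Fin d)) :=
  Measure.map (MeasurableEquiv.toLp 2 (Fin d → ℝ))
    (Measure.pi fun _ => gaussianReal 0 1)

section aux

theorem my_integral_pi_prod {n : ℕ} (μ : Fin n → Measure ℝ) [∀ i, SigmaFinite (μ i)]
    (f : Fin n → ℝ → ℝ) :
    ∫ x : Fin n → ℝ, ∏ i, f i (x i) ∂(Measure.pi μ) = ∏ i, ∫ x, f i x ∂(μ i) := by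
  induction n with
  | zero => simp [Measure.real, Measure.pi_univ]
  | succ n ih =>
      calc
        _ = ∫ x : ℝ × (Fin n → ℝ), f 0 x.1 * ∏ i : Fin n, f i.succ (x.2 i)
              ∂((μ 0).prod (Measure.pi fun i => μ i.succ)) := by
          rw [← ((measurePreserving_piFinSuccAbove μ 0).symm).integral_comp']
          simp_rw [MeasurableEquiv.piFinSuccAbove_symm_apply, Fin.insertNthEquiv,
            Fin.prod_univ_succ, Fin.insertNth_zero, Equiv.coe_fn_mk, Fin.cons_succ,
            Fin.zero_succAbove, Fin.cons_zero, cast_eq]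
        _ = (∫ x, f 0 x ∂(μ 0)) * ∏ i : Fin n, ∫ x, f i.succ x ∂(μ i.succ) := by
          rw [← ih, ← integral_prod_mul]
        _ = ∏ i, ∫ x, f i x ∂(μ i) := by rw [Fin.prod_univ_succ]

theorem my_gauss1d (c s a : ℝ) (hb : 2 * c * s ^ 2 < 1) :
    ∫ z, Real.exp (c * (a + s * z) ^ 2) ∂(gaussianReal 0 1) =
      Real.exp (c * a ^ 2 / (1 - 2 * c * s ^ 2)) / Real.sqrt (1 - 2 * c * s ^ 2) := by
  have hb' : (0:ℝ) < 1 - 2 * c * s ^ 2 := by linarith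
  set b : ℝ := 1 / 2 - c * s ^ 2 with hbdef
  have hbpos : 0 < b := by rw [hbdef]; linarith
  set t : ℝ := 2*a*c*s/(2*b) with htdef
  set R : ℝ := c * a ^ 2 + (2*a*c*s)^2/(4*b) with hRdef
  rw [gaussianReal_of_var_ne_zero 0 one_ne_zero]
  have hpdf : gaussianPDF 0 1 = fun x => ENNReal.ofReal (gaussianPDFReal 0 1 x) := rfl
  rw [hpdf]
  have h1 : (fun x => ENNReal.ofReal (gaussianPDFReal 0 1 x))
      = fun x => ((Real.toNNReal (gaussianPDFReal 0 1 x) : ℝ≥0) : ℝ≥0∞) := by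
    ext x; simp [ENNReal.ofReal]
  rw [h1, integral_withDensity_eq_integral_smul
    (by exact (measurable_gaussianPDFReal 0 1).real_toNNReal)]
  have h2 : ∀ x : ℝ, (Real.toNNReal (gaussianPDFReal 0 1 x)) • Real.exp (c * (a + s * x) ^ 2)
      = ((Real.sqrt (2 * π))⁻¹ * Real.exp R) * Real.exp (-b * (x - t) ^ 2) := by
    intro x
    rw [NNReal.smul_def, Real.coe_toNNReal _ (gaussianPDFReal_nonneg 0 1 x)]
    simp only [gaussianPDFReal, NNReal.coe_one, mul_one, sub_zero]
    rw [smul_eq_mul, mul_assoc, ← Real.exp_add, mul_assoc, ← Real.exp_add]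
    congr 1
    congr 1
    rw [htdef, hRdef]
    field_simp
    ring
  simp_rw [h2]
  rw [integral_const_mul, integral_sub_right_eq_self (fun x => Real.exp (-b * x ^ 2)) t,
    integral_gaussian b]
  have h2b : 2 * b = 1 - 2 * c * s ^ 2 := by rw [hbdef]; ring
  have hR : R = c * a ^ 2 / (1 - 2 * c * s ^ 2) := by
    rw [hRdef, ← h2b]; field_simp; ring
  rw [hR]
  rw [show (Real.sqrt (2*π))⁻¹ * Real.exp (c * a ^ 2 / (1 - 2 * c * s ^ 2)) * Real.sqrt (π / b)
      = Real.exp (c * a ^ 2 / (1 - 2 * c * s ^ 2)) * (Real.sqrt (π / b) / Real.sqrt (2*π)) by ring]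
  rw [← Real.sqrt_div (by positivity)]
  rw [show π / b / (2 * π) = 1 / (2*b) by field_simp [Real.pi_ne_zero]]
  rw [h2b, Real.sqrt_div' 1 (by linarith), Real.sqrt_one]
  ring

theorem my_gaussd {d : ℕ} (c s : ℝ) (hb : 2 * c * s ^ 2 < 1)
    (y : EuclideanSpace ℝ (Fin d)) :
    ∫ z, Real.exp (c * ‖y + s • z‖ ^ 2) ∂(stdGaussian d) =
      Real.exp (c * ‖y‖ ^ 2 / (1 - 2 * c * s ^ 2)) / (Real.sqrt (1 - 2 * c * s ^ 2)) ^ d := by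
  have hb' : (0:ℝ) < 1 - 2 * c * s ^ 2 := by linarith
  rw [_root_.stdGaussian, integral_map_equiv]
  have hcoord : ∀ (z : Fin d → ℝ),
      ‖y + s • ((MeasurableEquiv.toLp 2 (Fin d → ℝ)) z)‖ ^ 2
      = ∑ i, (y i + s * z i) ^ 2 := by
    intro z
    rw [EuclideanSpace.norm_eq, Real.sq_sqrt (by positivity)]
    congr 1; ext i
    rw [Real.norm_eq_abs, sq_abs]
    rfl
  have hnorm : ‖y‖ ^ 2 = ∑ i, (y i) ^ 2 := by
    rw [EuclideanSpace.norm_eq, Real.sq_sqrt (by positivity)]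
    congr 1; ext i; rw [Real.norm_eq_abs, sq_abs]
  simp_rw [hcoord, Finset.mul_sum, Real.exp_sum]
  rw [my_integral_pi_prod _ (fun i z => Real.exp (c * (y i + s * z) ^ 2))]
  simp_rw [my_gauss1d c s _ hb]
  rw [Finset.prod_div_distrib, Finset.prod_const, ← Real.exp_sum, hnorm, Finset.mul_sum,
    Finset.sum_div, Finset.card_univ, Fintype.card_fin]

variable {d : ℕ}

theorem my_cont {U : EuclideanSpace ℝ (Fin d) → ℝ} (hU : ContDiff ℝ 2 U)
    (x v : EuclideanSpace ℝ (Fin d)) :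
    Continuous (fun t : ℝ => iteratedFDeriv ℝ 2 U (t • x) ![x, v]) := by
  have h5 : Continuous (fun t : ℝ => iteratedFDeriv ℝ 2 U (t • x)) :=
    (hU.continuous_iteratedFDeriv le_rfl).comp (continuous_id.smul continuous_const)
  exact (continuous_eval_const ![x, v]).comp h5

theorem my_ftc {U : EuclideanSpace ℝ (Fin d) → ℝ} (hU : ContDiff ℝ 2 U)
    (x v : EuclideanSpace ℝ (Fin d)) :
    fderiv ℝ U x v - fderiv ℝ U 0 v
      = ∫ t in (0:ℝ)..1, iteratedFDeriv ℝ 2 U (t • x) ![x, v] := by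
  have hd1 : ContDiff ℝ 1 (fderiv ℝ U) := hU.fderiv_right (by norm_num)
  have hderiv : ∀ t : ℝ, HasDerivAt (fun t : ℝ => fderiv ℝ U (t • x) v)
      (iteratedFDeriv ℝ 2 U (t • x) ![x, v]) t := by
    intro t
    have h2 : HasDerivAt (fun t : ℝ => t • x) x t := by
      simpa using (hasDerivAt_id t).smul_const x
    have h1 : HasFDerivAt (fderiv ℝ U) (fderiv ℝ (fderiv ℝ U) (t • x)) (t • x) :=
      (hd1.differentiable one_ne_zero (t • x)).hasFDerivAt
    have h3 : HasDerivAt (fun t : ℝ => fderiv ℝ U (t • x))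
        (fderiv ℝ (fderiv ℝ U) (t • x) x) t := h1.comp_hasDerivAt t h2
    have h4 := h3.clm_apply (hasDerivAt_const t v)
    simp only [map_zero, add_zero] at h4
    rw [iteratedFDeriv_two_apply]
    simpa using h4
  have hcont := my_cont hU x v
  have := intervalIntegral.integral_eq_sub_of_hasDerivAt
    (f := fun t : ℝ => fderiv ℝ U (t • x) v) (fun t _ => hderiv t)
    (hcont.intervalIntegrable 0 1)
  rw [this]
  norm_num

theorem my_fderiv0 {U : EuclideanSpace ℝ (Fin d) → ℝ} (hgrad0 : gradient U 0 = 0) :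
    fderiv ℝ U 0 = 0 := by
  have h : (InnerProductSpace.toDual ℝ (EuclideanSpace ℝ (Fin d))) (gradient U 0)
      = fderiv ℝ U 0 := LinearIsometryEquiv.apply_symm_apply _ _
  rw [← h, hgrad0, map_zero]

theorem my_grad_inner (U : EuclideanSpace ℝ (Fin d) → ℝ) (x v : EuclideanSpace ℝ (Fin d)) :
    (inner ℝ (gradient U x) v : ℝ) = fderiv ℝ U x v := by
  simp [gradient, InnerProductSpace.toDual_symm_apply]

theorem my_hess_bound {U : EuclideanSpace ℝ (Fin d) → ℝ} {L : ℝ}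
    (hHess : ∀ x, ‖iteratedFDeriv ℝ 2 U x‖ ≤ L) (z x v : EuclideanSpace ℝ (Fin d)) :
    |iteratedFDeriv ℝ 2 U z ![x, v]| ≤ L * (‖x‖ * ‖v‖) := by
  have h := (iteratedFDeriv ℝ 2 U z).le_opNorm ![x, v]
  rw [Fin.prod_univ_two] at h
  simp only [Matrix.cons_val_zero, Matrix.cons_val_one, Matrix.head_cons] at h
  calc |iteratedFDeriv ℝ 2 U z ![x, v]| = ‖iteratedFDeriv ℝ 2 U z ![x, v]‖ := rfl
    _ ≤ ‖iteratedFDeriv ℝ 2 U z‖ * (‖x‖ * ‖v‖) := h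
    _ ≤ L * (‖x‖ * ‖v‖) := by
        apply mul_le_mul_of_nonneg_right (hHess z) (by positivity)

theorem my_fderiv_bound {U : EuclideanSpace ℝ (Fin d) → ℝ} {L : ℝ}
    (hU : ContDiff ℝ 2 U) (hgrad0 : gradient U 0 = 0)
    (hHess : ∀ x, ‖iteratedFDeriv ℝ 2 U x‖ ≤ L) (x v : EuclideanSpace ℝ (Fin d)) :
    |fderiv ℝ U x v| ≤ L * (‖x‖ * ‖v‖) := by
  have h := my_ftc hU x v
  rw [my_fderiv0 hgrad0] at h
  simp only [ContinuousLinearMap.zero_apply, sub_zero] at h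
  rw [h, ← Real.norm_eq_abs]
  have h9 := intervalIntegral.norm_integral_le_of_norm_le_const
    (C := L * (‖x‖ * ‖v‖)) (a := (0:ℝ)) (b := 1)
    (f := fun t => iteratedFDeriv ℝ 2 U (t • x) ![x, v]) ?_
  · simpa using h9
  · intro t _
    rw [Real.norm_eq_abs]
    exact my_hess_bound hHess _ x v

theorem my_grad_norm_bound {U : EuclideanSpace ℝ (Fin d) → ℝ} {L : ℝ}
    (hU : ContDiff ℝ 2 U) (hgrad0 : gradient U 0 = 0)
    (hHess : ∀ x, ‖iteratedFDeriv ℝ 2 U x‖ ≤ L) (x : EuclideanSpace ℝ (Fin d)) :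
    ‖gradient U x‖ ≤ L * ‖x‖ := by
  rcases eq_or_ne (gradient U x) 0 with h | h
  · rw [h, norm_zero]
    have : (0:ℝ) ≤ L := le_trans (norm_nonneg _) (hHess 0)
    positivity
  · have h1 : ‖gradient U x‖ ^ 2 = inner ℝ (gradient U x) (gradient U x) := by
      rw [real_inner_self_eq_norm_sq]
    have h2 : (inner ℝ (gradient U x) (gradient U x) : ℝ) ≤ L * (‖x‖ * ‖gradient U x‖) := by
      rw [my_grad_inner]
      exact le_trans (le_abs_self _) (my_fderiv_bound hU hgrad0 hHess x _)
    have h3 : 0 < ‖gradient U x‖ := norm_pos_iff.mpr h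
    nlinarith [h1, h2, h3]

theorem my_hess_smul {U : EuclideanSpace ℝ (Fin d) → ℝ} (z u : EuclideanSpace ℝ (Fin d))
    (c : ℝ) :
    iteratedFDeriv ℝ 2 U z ![c • u, c • u] = c * (c * iteratedFDeriv ℝ 2 U z ![u, u]) := by
  have e1 : ![c • u, c • u] = Function.update ![u, c • u] 0 (c • u) := by
    funext i; fin_cases i <;> simp
  have e2 : Function.update ![u, c • u] 0 u = ![u, c • u] := by
    funext i; fin_cases i <;> simp
  have e3 : ![u, c • u] = Function.update ![u, u] 1 (c • u) := by
    funext i; fin_cases i <;> simp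
  have e4 : Function.update ![u, u] 1 u = ![u, u] := by
    funext i; fin_cases i <;> simp
  rw [e1, (iteratedFDeriv ℝ 2 U z).map_update_smul ![u, c • u] 0 c u, e2, e3,
    (iteratedFDeriv ℝ 2 U z).map_update_smul ![u, u] 1 c u, e4]
  simp

theorem my_drift {U : EuclideanSpace ℝ (Fin d) → ℝ} {L m K : ℝ}
    (hm : 0 < m) (hmL : m ≤ L) (hK : 0 ≤ K)
    (hU : ContDiff ℝ 2 U) (hgrad0 : gradient U 0 = 0)
    (hHess : ∀ x, ‖iteratedFDeriv ℝ 2 U x‖ ≤ L)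
    (hconv : ∀ x y : EuclideanSpace ℝ (Fin d), K ≤ ‖x‖ → ‖y‖ = 1 →
      m ≤ iteratedFDeriv ℝ 2 U x ![y, y])
    (x : EuclideanSpace ℝ (Fin d)) (hx : 2 * K * (1 + L / m) ≤ ‖x‖) (hx0 : x ≠ 0) :
    m / 2 * ‖x‖ ^ 2 ≤ fderiv ℝ U x x := by
  have hxpos : 0 < ‖x‖ := norm_pos_iff.mpr hx0
  have hLpos : 0 < L := lt_of_lt_of_le hm hmL
  set t₀ : ℝ := K / ‖x‖ with ht₀
  have ht₀0 : 0 ≤ t₀ := by positivity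
  have hLm1 : (1:ℝ) ≤ L / m := (one_le_div hm).mpr hmL
  have hKx : K ≤ ‖x‖ := by nlinarith
  have ht₀1 : t₀ ≤ 1 := by rw [ht₀, div_le_one hxpos]; exact hKx
  have hψcont := my_cont hU x x
  set ψ : ℝ → ℝ := fun t => iteratedFDeriv ℝ 2 U (t • x) ![x, x] with hψ
  have h := my_ftc hU x x
  rw [my_fderiv0 hgrad0] at h
  simp only [ContinuousLinearMap.zero_apply, sub_zero] at h
  have hsplit : ∫ t in (0:ℝ)..1, ψ t
      = (∫ t in (0:ℝ)..t₀, ψ t) + ∫ t in t₀..(1:ℝ), ψ t :=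
    (intervalIntegral.integral_add_adjacent_intervals
      (hψcont.intervalIntegrable 0 t₀) (hψcont.intervalIntegrable t₀ 1)).symm
  have hb1 : -(L * (t₀ * ‖x‖ ^ 2)) ≤ ∫ t in (0:ℝ)..t₀, ψ t := by
    have := intervalIntegral.integral_mono_on (μ := volume) ht₀0
      (intervalIntegrable_const (c := -(L * ‖x‖ ^ 2)))
      (hψcont.intervalIntegrable 0 t₀)
      (fun t _ => by
        have hb := my_hess_bound hHess (t • x) x x
        have : -(L * (‖x‖ * ‖x‖)) ≤ ψ t := by
          rw [hψ]; exact neg_le_of_abs_le hb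
        nlinarith [this])
    simpa using this
  have hb2 : m * ((1 - t₀) * ‖x‖ ^ 2) ≤ ∫ t in t₀..(1:ℝ), ψ t := by
    have := intervalIntegral.integral_mono_on (μ := volume) ht₀1
      (intervalIntegrable_const (c := m * ‖x‖ ^ 2))
      (hψcont.intervalIntegrable t₀ 1)
      (fun t ht => by
        have htt : t₀ ≤ t := ht.1
        have htK : K ≤ ‖t • x‖ := by
          rw [norm_smul, Real.norm_eq_abs, abs_of_nonneg (le_trans ht₀0 htt)]
          rw [ht₀, div_le_iff₀ hxpos] at htt
          linarith [htt]
        set u : EuclideanSpace ℝ (Fin d) := ‖x‖⁻¹ • x with hu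
        have hu1 : ‖u‖ = 1 := by
          rw [hu, norm_smul, Real.norm_eq_abs, abs_of_nonneg (by positivity)]
          field_simp
        have hxu : x = ‖x‖ • u := by
          rw [hu, smul_smul, mul_inv_cancel₀ hxpos.ne', one_smul]
        have hsc := my_hess_smul (U := U) (t • x) u ‖x‖
        rw [← hxu] at hsc
        have : ψ t = ‖x‖ * (‖x‖ * iteratedFDeriv ℝ 2 U (t • x) ![u, u]) := hsc
        rw [this]
        have := hconv (t • x) u htK hu1
        nlinarith [this])
    simpa using this
  have hKt : t₀ * ‖x‖ ^ 2 = K * ‖x‖ := by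
    rw [ht₀]; field_simp
  have h2 : K * (m + L) ≤ m / 2 * ‖x‖ := by
    have h3 := mul_le_mul_of_nonneg_left hx (by positivity : (0:ℝ) ≤ m / 2)
    have h4 : m / 2 * (2 * K * (1 + L / m)) = K * (m + L) := by
      field_simp
    linarith [h4 ▸ h3]
  rw [h, hsplit]
  calc m / 2 * ‖x‖ ^ 2 ≤ m * ‖x‖ ^ 2 - (m + L) * (K * ‖x‖) := by
        nlinarith [mul_le_mul_of_nonneg_right h2 hxpos.le]
    _ = -(L * (t₀ * ‖x‖ ^ 2)) + m * ((1 - t₀) * ‖x‖ ^ 2) := by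
        linear_combination (m + L) * hKt
    _ ≤ (∫ t in (0:ℝ)..t₀, ψ t) + ∫ t in t₀..(1:ℝ), ψ t := add_le_add hb1 hb2

end aux

set_option maxHeartbeats 2000000 in
/-- Geometric drift of ULA outside a ball: with `η̄ = m/16`, `K̃ = 2K(1+L/m)`,
`γ̄ ∈ (0, m/(4L²)]`, `γ ∈ (0, γ̄]` and `‖x‖ ≥ max(K̃, 4√(d/m))`, the one-step ULA kernel
satisfies `Q_γ V_η̄(x) ≤ exp(−η̄mγ‖x‖²/4) V_η̄(x)`, where `V_η̄(x) = exp(η̄‖x‖²)`. -/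
theorem ula_drift_outside_ball {d : ℕ} (U : EuclideanSpace ℝ (Fin d) → ℝ)
    (L m K γbar γ : ℝ) (hm : 0 < m) (hmL : m ≤ L) (hK : 0 ≤ K)
    (hU : ContDiff ℝ 2 U) (hgrad0 : gradient U 0 = 0)
    (hHess : ∀ x, ‖iteratedFDeriv ℝ 2 U x‖ ≤ L)
    (hconv : ∀ x y : EuclideanSpace ℝ (Fin d), K ≤ ‖x‖ → ‖y‖ = 1 →
      m ≤ iteratedFDeriv ℝ 2 U x ![y, y])
    (hγbar : γbar ∈ Set.Ioc 0 (m / (4 * L ^ 2))) (hγ : γ ∈ Set.Ioc 0 γbar) :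
    ∀ x : EuclideanSpace ℝ (Fin d),
      max (2 * K * (1 + L / m)) (4 * Real.sqrt (d / m)) ≤ ‖x‖ →
      ∫ z, Real.exp ((m / 16) * ‖x - γ • gradient U x + Real.sqrt (2 * γ) • z‖ ^ 2)
          ∂(stdGaussian d) ≤
        Real.exp (-(m / 16) * m * γ * ‖x‖ ^ 2 / 4) * Real.exp ((m / 16) * ‖x‖ ^ 2) := by
  intro x hx
  have hLpos : 0 < L := lt_of_lt_of_le hm hmL
  have hγ0 : 0 < γ := hγ.1
  have hγ4 : γ * (4 * L ^ 2) ≤ m :=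
    (le_div_iff₀ (by positivity)).mp (le_trans hγ.2 hγbar.2)
  set c : ℝ := m / 16 with hc
  have hc0 : 0 < c := by rw [hc]; positivity
  set A : ℝ := m * γ / 4 with hA
  have hA0 : 0 < A := by rw [hA]; positivity
  have hA16 : A ≤ 1 / 16 := by
    have h1 : 4 * m * γ * L ^ 2 ≤ m ^ 2 := by nlinarith
    have h2 : m ^ 2 ≤ L ^ 2 := by nlinarith
    nlinarith [sq_nonneg L, hLpos]
  have hA1 : 0 < 1 - A := by linarith
  have hxmax1 : 2 * K * (1 + L / m) ≤ ‖x‖ := le_trans (le_max_left _ _) hx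
  have hxmax2 : 4 * Real.sqrt (d / m) ≤ ‖x‖ := le_trans (le_max_right _ _) hx
  by_cases hx0 : x = 0
  · -- degenerate case: x = 0 forces d = 0
    have hnx : ‖x‖ = 0 := by rw [hx0, norm_zero]
    have hd0 : (d : ℝ) = 0 := by
      rw [hnx] at hxmax2
      have hs : Real.sqrt ((d : ℝ) / m) = 0 :=
        le_antisymm (by linarith [Real.sqrt_nonneg ((d:ℝ)/m)]) (Real.sqrt_nonneg _)
      have h := (Real.sqrt_eq_zero').mp hs
      have h2 : (0:ℝ) ≤ (d:ℝ) / m := by positivity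
      have hdm : (d:ℝ) / m = 0 := le_antisymm h h2
      field_simp at hdm
      simpa using hdm
    have hd : d = 0 := by exact_mod_cast hd0
    subst hd
    have hprob : IsProbabilityMeasure (stdGaussian 0) := by
      rw [_root_.stdGaussian]
      have : IsProbabilityMeasure (Measure.pi fun _ : Fin 0 => gaussianReal 0 1) :=
        inferInstance
      exact Measure.isProbabilityMeasure_map (Measurable.aemeasurable (MeasurableEquiv.measurable _))
    have hall : ∀ v : EuclideanSpace ℝ (Fin 0), v = 0 := fun v => Subsingleton.elim v 0
    have : ∀ z : EuclideanSpace ℝ (Fin 0),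
        Real.exp (c * ‖x - γ • gradient U x + Real.sqrt (2 * γ) • z‖ ^ 2) = 1 := by
      intro z
      rw [hall (x - γ • gradient U x + Real.sqrt (2 * γ) • z), norm_zero]
      norm_num
    simp_rw [this]
    rw [integral_const]
    simp [hnx]
  · -- main case
    have hxpos : 0 < ‖x‖ := norm_pos_iff.mpr hx0
    set s : ℝ := Real.sqrt (2 * γ) with hs
    set y : EuclideanSpace ℝ (Fin d) := x - γ • gradient U x with hy
    have hs2 : s ^ 2 = 2 * γ := Real.sq_sqrt (by positivity)
    have hcs : 2 * c * s ^ 2 = A := by rw [hs2, hc, hA]; ring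
    have hcs1 : 2 * c * s ^ 2 < 1 := by rw [hcs]; linarith
    rw [my_gaussd c s hcs1 y, hcs]
    -- drift bound
    have hdrift : m / 2 * ‖x‖ ^ 2 ≤ fderiv ℝ U x x :=
      my_drift hm hmL hK hU hgrad0 hHess hconv x hxmax1 hx0
    have hgb : ‖gradient U x‖ ≤ L * ‖x‖ := my_grad_norm_bound hU hgrad0 hHess x
    have hyx : ‖y‖ ^ 2 ≤ (1 - 3 * A) * ‖x‖ ^ 2 := by
      have hexp : ‖y‖ ^ 2 = ‖x‖ ^ 2 - 2 * (γ * (fderiv ℝ U x x)) + γ ^ 2 * ‖gradient U x‖ ^ 2 := by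
        rw [hy, @norm_sub_sq_real]
        rw [real_inner_smul_right, norm_smul, Real.norm_eq_abs, abs_of_nonneg hγ0.le]
        rw [show (inner ℝ x (gradient U x) : ℝ) = fderiv ℝ U x x by
          rw [real_inner_comm]; exact my_grad_inner U x x]
        ring
      have hgb2 : ‖gradient U x‖ ^ 2 ≤ L ^ 2 * ‖x‖ ^ 2 := by
        nlinarith [norm_nonneg (gradient U x), norm_nonneg x]
      have hgl : γ ^ 2 * L ^ 2 ≤ γ * (m / 4) := by nlinarith
      rw [hA]
      nlinarith [hdrift, hgb2, hγ0, sq_nonneg ‖x‖]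
    -- log bound
    have hlog : -Real.log (1 - A) ≤ 2 * A := by
      have hexp2 : Real.exp (-(2 * A)) ≤ 1 - A := by
        rw [Real.exp_neg]
        have h7 := Real.add_one_le_exp (2 * A)
        rw [inv_le_iff_one_le_mul₀ (Real.exp_pos _)]
        nlinarith [h7, hA0, hA16]
      have := (Real.le_log_iff_exp_le hA1).mpr hexp2
      linarith
    -- dimension bound
    have hxd : (d : ℝ) ≤ c * ‖x‖ ^ 2 := by
      have h8 : (4 * Real.sqrt ((d:ℝ) / m)) ^ 2 ≤ ‖x‖ ^ 2 := by
        apply sq_le_sq' _ hxmax2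
        have : 0 ≤ 4 * Real.sqrt ((d:ℝ)/m) := by positivity
        linarith
      rw [mul_pow, Real.sq_sqrt (by positivity : (0:ℝ) ≤ (d:ℝ)/m)] at h8
      rw [hc]
      have : 16 * ((d:ℝ) / m) ≤ ‖x‖ ^ 2 := by linarith
      calc (d:ℝ) = m / 16 * (16 * ((d:ℝ)/m)) := by field_simp
        _ ≤ m / 16 * ‖x‖ ^ 2 := by
            apply mul_le_mul_of_nonneg_left this (by positivity)
    -- rewrite the sqrt power as an exponential
    have hsq : (Real.sqrt (1 - A)) ^ d = Real.exp ((d : ℝ) * (Real.log (1 - A) / 2)) := by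
      rw [← Real.log_sqrt hA1.le, Real.exp_nat_mul, Real.exp_log (Real.sqrt_pos.mpr hA1)]
    rw [hsq, ← Real.exp_sub, ← Real.exp_add]
    apply Real.exp_le_exp.mpr
    -- final arithmetic
    have step1 : c * ‖y‖ ^ 2 / (1 - A) ≤ c * (1 - 2 * A) * ‖x‖ ^ 2 := by
      rw [div_le_iff₀ hA1]
      nlinarith [mul_le_mul_of_nonneg_left hyx hc0.le, sq_nonneg A,
        mul_nonneg (mul_nonneg hc0.le (sq_nonneg ‖x‖)) (sq_nonneg A)]
    have step2 : -((d : ℝ) * (Real.log (1 - A) / 2)) ≤ c * A * ‖x‖ ^ 2 := by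
      have h9 : -((d : ℝ) * (Real.log (1 - A) / 2)) ≤ (d : ℝ) * A := by
        nlinarith [hlog, (by positivity : (0:ℝ) ≤ (d:ℝ))]
      have h10 : (d : ℝ) * A ≤ c * ‖x‖ ^ 2 * A := by
        apply mul_le_mul_of_nonneg_right hxd hA0.le
      linarith
    have hfinal : c * (1 - 2 * A) * ‖x‖ ^ 2 + c * A * ‖x‖ ^ 2
        = c * ‖x‖ ^ 2 - c * A * ‖x‖ ^ 2 := by ring
    have hcA : -c * m * γ * ‖x‖ ^ 2 / 4 = -(c * A * ‖x‖ ^ 2) := by rw [hA]; ring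
    linarith [step1, step2, hfinal, hcA]
end

section
/- Let U : ℝ^d → ℝ be C² with ∇U(0)=0, sup ‖D²U‖ ≤ L, and D²U(x)[y,y] ≥ m > 0 for ‖x‖ ≥ K and unit y. Let γ̄ ∈ (0, m/(4L²)] and γ ∈ (0, γ̄]. Then for all x ∈ ℝ^d, ∫ ‖y‖² Q_γ(x, dy) ≤ (1 − mγ/2)‖x‖² + γ b̃, where Q_γ(x,·) is the law of x − γ∇U(x) + √(2γ)Z with Z standard Gaussian, K̂ = max(K̃, 2√(2d/m)) with K̃ = 2K(1+L/m), and b̃ = 2d + K̂²(γ̄L² + 2L + m/2). -/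
open MeasureTheory ProbabilityTheory Real

open Filter
open scoped ENNReal NNReal RealInnerProductSpace

/-! ### Auxiliary one-dimensional Gaussian integrals -/

lemma integrable_id_mul_gauss' : Integrable (fun x : ℝ => x * rexp (-(1/2) * x ^ 2)) :=
  integrable_mul_exp_neg_mul_sq (by norm_num)

lemma integrable_sq_mul_gauss' : Integrable (fun x : ℝ => x ^ 2 * rexp (-(1/2) * x ^ 2)) := by
  have := integrable_rpow_mul_exp_neg_mul_sq (b := 1/2) (by norm_num) (s := 2) (by norm_num)
  simpa [Real.rpow_two] using this

lemma integral_id_mul_gauss' : ∫ x : ℝ, x * rexp (-(1/2) * x ^ 2) = 0 := by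
  have hint := integrable_id_mul_gauss'
  rw [← intervalIntegral.integral_Iic_add_Ioi (b := (0:ℝ)) hint.integrableOn hint.integrableOn]
  have h1 : (∫ x in Set.Iic (0:ℝ), x * rexp (-(1/2) * x ^ 2))
      = ∫ x in Set.Ioi (0:ℝ), -(x * rexp (-(1/2) * x ^ 2)) := by
    rw [show Set.Iic (0:ℝ) = Set.Iic (-(0:ℝ)) by norm_num,
      ← integral_comp_neg_Ioi 0 (fun x => x * rexp (-(1/2) * x ^ 2))]
    congr 1; funext x; ring_nf
  rw [h1, integral_neg]
  ring

lemma tendsto_gauss_aux' : Filter.Tendsto (fun x : ℝ => -x * rexp (-(1/2) * x ^ 2))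
    Filter.atTop (nhds 0) := by
  have h2 : Filter.Tendsto (fun x : ℝ => rexp (-(1/2) * x)) Filter.atTop (nhds 0) := by
    simp only [Real.tendsto_exp_comp_nhds_zero, neg_mul]
    exact Filter.tendsto_neg_atBot_iff.mpr
      ((Filter.tendsto_const_mul_atTop_of_pos (by norm_num)).mpr Filter.tendsto_id)
  have h := (rpow_mul_exp_neg_mul_sq_isLittleO_exp_neg (b := 1/2) (by norm_num)
    1).isBigO.trans_tendsto h2
  simp only [Real.rpow_one] at h
  simpa using h.neg

lemma hasDerivAt_gauss_aux' (x : ℝ) : HasDerivAt (fun y : ℝ => -y * rexp (-(1/2) * y ^ 2))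
    ((x ^ 2 - 1) * rexp (-(1/2) * x ^ 2)) x := by
  have h1 : HasDerivAt (fun y : ℝ => rexp (-(1/2) * y ^ 2))
      (rexp (-(1/2) * x ^ 2) * (-(1/2) * (2 * x))) x :=
    (((hasDerivAt_pow 2 x).const_mul (-(1/2)))).exp.congr_deriv (by ring)
  have := ((hasDerivAt_id x).neg.mul h1)
  exact this.congr_deriv (by simp only [Pi.neg_apply, id_eq]; ring)

lemma integrableOn_gauss_aux' : IntegrableOn (fun x : ℝ => (x ^ 2 - 1) * rexp (-(1/2) * x ^ 2))
    (Set.Ioi 0) := by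
  have : Integrable (fun x : ℝ => (x ^ 2 - 1) * rexp (-(1/2) * x ^ 2)) := by
    have := integrable_sq_mul_gauss'.sub (integrable_exp_neg_mul_sq
      (show (0:ℝ) < 1/2 by norm_num))
    refine this.congr (Filter.Eventually.of_forall fun x => by simp [Pi.sub_apply]; ring)
  exact this.integrableOn

lemma key_Ioi_gauss' : ∫ x in Set.Ioi (0:ℝ), (x ^ 2 - 1) * rexp (-(1/2) * x ^ 2) = 0 := by
  have := integral_Ioi_of_hasDerivAt_of_tendsto
    (f := fun y : ℝ => -y * rexp (-(1/2) * y ^ 2))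
    (f' := fun x : ℝ => (x ^ 2 - 1) * rexp (-(1/2) * x ^ 2))
    (a := 0) (m := 0)
    (by exact (hasDerivAt_gauss_aux' 0).continuousAt.continuousWithinAt)
    (fun x _ => hasDerivAt_gauss_aux' x) integrableOn_gauss_aux' tendsto_gauss_aux'
  simpa using this

lemma integral_sq_mul_gauss' : ∫ x : ℝ, x ^ 2 * rexp (-(1/2) * x ^ 2) = Real.sqrt (2 * π) := by
  have hint : Integrable (fun x : ℝ => (x ^ 2 - 1) * rexp (-(1/2) * x ^ 2)) := by
    have := integrable_sq_mul_gauss'.sub (integrable_exp_neg_mul_sq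
      (show (0:ℝ) < 1/2 by norm_num))
    refine this.congr (Filter.Eventually.of_forall fun x => by simp [Pi.sub_apply]; ring)
  have hfull : ∫ x : ℝ, (x ^ 2 - 1) * rexp (-(1/2) * x ^ 2) = 0 := by
    rw [← intervalIntegral.integral_Iic_add_Ioi (b := (0:ℝ)) hint.integrableOn hint.integrableOn]
    have h1 : (∫ x in Set.Iic (0:ℝ), (x ^ 2 - 1) * rexp (-(1/2) * x ^ 2))
        = ∫ x in Set.Ioi (0:ℝ), (x ^ 2 - 1) * rexp (-(1/2) * x ^ 2) := by
      rw [show Set.Iic (0:ℝ) = Set.Iic (-(0:ℝ)) by norm_num,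
        ← integral_comp_neg_Ioi 0 (fun x => (x ^ 2 - 1) * rexp (-(1/2) * x ^ 2))]
      congr 1; funext x; ring_nf
    rw [h1, key_Ioi_gauss']; ring
  have hsub := integral_sub integrable_sq_mul_gauss'
    (integrable_exp_neg_mul_sq (show (0:ℝ) < 1/2 by norm_num))
  have heq : ∫ x : ℝ, (x ^ 2 - 1) * rexp (-(1/2) * x ^ 2)
      = (∫ x : ℝ, x ^ 2 * rexp (-(1/2) * x ^ 2)) - ∫ x : ℝ, rexp (-(1/2) * x ^ 2) := by
    rw [← hsub]; congr 1; funext x; ring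
  rw [heq] at hfull
  have hg : ∫ x : ℝ, rexp (-(1/2) * x ^ 2) = Real.sqrt (2 * π) := by
    rw [integral_gaussian]
    congr 1
    rw [div_div_eq_mul_div]
    ring
  linarith [hfull, hg]

/-! ### Moments of the one-dimensional standard Gaussian measure -/

lemma gaussianPDFReal_zero_one' (x : ℝ) :
    gaussianPDFReal 0 1 x = (Real.sqrt (2 * π))⁻¹ * rexp (-(1/2) * x ^ 2) := by
  simp only [gaussianPDFReal, NNReal.coe_one, mul_one, sub_zero]
  congr 1
  ring

lemma gaussianReal_integral_eq' (g : ℝ → ℝ) :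
    ∫ x, g x ∂(gaussianReal 0 1) = ∫ x, gaussianPDFReal 0 1 x * g x := by
  rw [gaussianReal_of_var_ne_zero _ one_ne_zero]
  have h : (gaussianPDF 0 1) = fun x => ((Real.toNNReal (gaussianPDFReal 0 1 x) : ℝ≥0) : ℝ≥0∞) :=
    rfl
  rw [h, integral_withDensity_eq_integral_smul
    (measurable_gaussianPDFReal 0 1).real_toNNReal g]
  congr 1
  funext x
  simp [NNReal.smul_def, Real.coe_toNNReal _ (gaussianPDFReal_nonneg 0 1 x)]

lemma gaussianReal_integrable_iff' (g : ℝ → ℝ) :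
    Integrable g (gaussianReal 0 1) ↔
      Integrable (fun x => gaussianPDFReal 0 1 x * g x) := by
  rw [gaussianReal_of_var_ne_zero _ one_ne_zero]
  have h : (gaussianPDF 0 1) = fun x => ((Real.toNNReal (gaussianPDFReal 0 1 x) : ℝ≥0) : ℝ≥0∞) :=
    rfl
  rw [h, integrable_withDensity_iff_integrable_smul
    (measurable_gaussianPDFReal 0 1).real_toNNReal]
  constructor <;> intro hh <;> refine hh.congr (Filter.Eventually.of_forall fun x => ?_) <;>
    simp [NNReal.smul_def, Real.coe_toNNReal _ (gaussianPDFReal_nonneg 0 1 x)]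

lemma sqrt_two_pi_pos' : 0 < Real.sqrt (2 * π) :=
  Real.sqrt_pos.mpr (by positivity)

lemma integrable_id_gauss' : Integrable (fun x : ℝ => x) (gaussianReal 0 1) := by
  rw [gaussianReal_integrable_iff']
  have := integrable_id_mul_gauss'.const_mul (Real.sqrt (2 * π))⁻¹
  refine this.congr (Eventually.of_forall fun x => ?_)
  simp only [gaussianPDFReal_zero_one']; ring

lemma integral_id_gauss' : ∫ x : ℝ, x ∂(gaussianReal 0 1) = 0 := by
  rw [gaussianReal_integral_eq']
  have h : (fun x : ℝ => gaussianPDFReal 0 1 x * x)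
      = fun x : ℝ => (Real.sqrt (2 * π))⁻¹ * (x * rexp (-(1/2) * x ^ 2)) := by
    funext x; simp only [gaussianPDFReal_zero_one']; ring
  rw [h, integral_const_mul, integral_id_mul_gauss', mul_zero]

lemma integrable_sq_gauss' : Integrable (fun x : ℝ => x ^ 2) (gaussianReal 0 1) := by
  rw [gaussianReal_integrable_iff']
  have := integrable_sq_mul_gauss'.const_mul (Real.sqrt (2 * π))⁻¹
  refine this.congr (Eventually.of_forall fun x => ?_)
  simp only [gaussianPDFReal_zero_one']; ring

lemma integral_sq_gauss' : ∫ x : ℝ, x ^ 2 ∂(gaussianReal 0 1) = 1 := by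
  rw [gaussianReal_integral_eq']
  have h : (fun x : ℝ => gaussianPDFReal 0 1 x * x ^ 2)
      = fun x : ℝ => (Real.sqrt (2 * π))⁻¹ * (x ^ 2 * rexp (-(1/2) * x ^ 2)) := by
    funext x; simp only [gaussianPDFReal_zero_one']; ring
  rw [h, integral_const_mul, integral_sq_mul_gauss',
    inv_mul_cancel₀ sqrt_two_pi_pos'.ne']

/-! ### Product structure -/

lemma map_eval_pi' {d : ℕ} (i : Fin d) :
    (Measure.pi fun _ : Fin d => gaussianReal 0 1).map (Function.eval i) = gaussianReal 0 1 := by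
  ext s hs
  rw [Measure.map_apply (measurable_pi_apply i) hs, Set.eval_preimage, Measure.pi_pi]
  rw [Finset.prod_eq_single i (fun j _ hj => by simp [Function.update_of_ne hj])
    (fun h => absurd (Finset.mem_univ i) h)]
  simp

lemma integrable_eval_pi' {d : ℕ} {g : ℝ → ℝ} (hg : Measurable g)
    (hint : Integrable g (gaussianReal 0 1)) (i : Fin d) :
    Integrable (fun y : Fin d → ℝ => g (y i)) (Measure.pi fun _ : Fin d => gaussianReal 0 1) := by
  have h2 : Integrable g ((Measure.pi fun _ : Fin d => gaussianReal 0 1).map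
      (Function.eval i)) := by rwa [map_eval_pi']
  exact (integrable_map_measure (by rw [map_eval_pi']; exact hg.aestronglyMeasurable)
    (measurable_pi_apply i).aemeasurable).mp h2

lemma integral_eval_pi' {d : ℕ} {g : ℝ → ℝ} (hg : Measurable g) (i : Fin d) :
    ∫ y, g (y i) ∂(Measure.pi fun _ : Fin d => gaussianReal 0 1)
      = ∫ x, g x ∂(gaussianReal 0 1) := by
  have := integral_map (μ := Measure.pi fun _ : Fin d => gaussianReal 0 1)
    (φ := Function.eval i) (measurable_pi_apply i).aemeasurable
    (f := g) (by rw [map_eval_pi']; exact hg.aestronglyMeasurable)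
  rw [map_eval_pi'] at this
  exact this.symm

/-- Second moment of a shifted scaled standard Gaussian. -/
lemma integral_norm_add_smul' (d : ℕ) (v : EuclideanSpace ℝ (Fin d)) (c : ℝ) :
    ∫ z, ‖v + c • z‖ ^ 2 ∂(stdGaussian d) = ‖v‖ ^ 2 + c ^ 2 * d := by
  set π' : Measure (Fin d → ℝ) := Measure.pi fun _ : Fin d => gaussianReal 0 1 with hπ'
  rw [_root_.stdGaussian, integral_map_equiv]
  have hpt : ∀ y : Fin d → ℝ,
      ‖v + c • ((MeasurableEquiv.toLp 2 (Fin d → ℝ)) y)‖ ^ 2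
        = ‖v‖ ^ 2 + ((2 * c) * ∑ i, v i * y i + c ^ 2 * ∑ i, (y i) ^ 2) := by
    intro y
    set z : EuclideanSpace ℝ (Fin d) := (MeasurableEquiv.toLp 2 (Fin d → ℝ)) y
    have hz : ∀ i, z i = y i := fun i => rfl
    have h1 : ⟪v, c • z⟫ = c * ∑ i, v i * y i := by
      rw [real_inner_smul_right, PiLp.inner_apply]
      simp [hz, mul_comm]
    have h2 : ‖c • z‖ ^ 2 = c ^ 2 * ∑ i, (y i) ^ 2 := by
      rw [← real_inner_self_eq_norm_sq, real_inner_smul_right, real_inner_smul_left,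
        PiLp.inner_apply]
      simp only [RCLike.inner_apply, conj_trivial, hz]
      rw [← mul_assoc]; congr 1
      · ring
      · exact Finset.sum_congr rfl fun i _ => (sq (y i)) ▸ rfl
    rw [norm_add_sq_real, h1, h2]
    ring
  simp_rw [hpt]
  have hint1 : Integrable (fun y : Fin d → ℝ => ∑ i, v i * y i) π' := by
    apply integrable_finset_sum
    intro i _
    exact (integrable_eval_pi' measurable_id integrable_id_gauss' i).const_mul (v i)
  have hint2 : Integrable (fun y : Fin d → ℝ => ∑ i, (y i) ^ 2) π' := by
    apply integrable_finset_sum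
    intro i _
    exact integrable_eval_pi' (measurable_id.pow_const 2) integrable_sq_gauss' i
  have hA : Integrable (fun y : Fin d → ℝ => 2 * c * ∑ i, v i * y i) π' :=
    hint1.const_mul _
  have hB : Integrable (fun y : Fin d → ℝ => c ^ 2 * ∑ i, (y i) ^ 2) π' :=
    hint2.const_mul _
  have hAB : Integrable (fun y : Fin d → ℝ =>
      2 * c * ∑ i, v i * y i + c ^ 2 * ∑ i, (y i) ^ 2) π' := hA.add hB
  have hfi : ∀ i : Fin d, Integrable (fun y : Fin d → ℝ => v i * y i) π' := fun i =>
    (integrable_eval_pi' measurable_id integrable_id_gauss' i).const_mul (v i)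
  have hsqi : ∀ i : Fin d, Integrable (fun y : Fin d → ℝ => (y i) ^ 2) π' := fun i =>
    integrable_eval_pi' (measurable_id.pow_const 2) integrable_sq_gauss' i
  rw [integral_add (integrable_const _) hAB,
    integral_add hA hB,
    integral_const, integral_const_mul, integral_const_mul,
    integral_finset_sum _ (fun i _ => hfi i),
    integral_finset_sum _ (fun i _ => hsqi i)]
  have e1 : ∀ i : Fin d, ∫ y : Fin d → ℝ, v i * y i ∂π' = 0 := by
    intro i
    rw [integral_const_mul]
    have := integral_eval_pi' (d := d) measurable_id i
    simp only [id] at this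
    rw [this, integral_id_gauss', mul_zero]
  have e2 : ∀ i : Fin d, ∫ y : Fin d → ℝ, (y i) ^ 2 ∂π' = 1 := by
    intro i
    have := integral_eval_pi' (d := d) (measurable_id.pow_const 2) i
    simp only [id] at this
    rw [this, integral_sq_gauss']
  rw [Finset.sum_congr rfl fun i _ => e1 i, Finset.sum_congr rfl fun i _ => e2 i]
  simp [measure_univ]

/-! ### Deterministic drift estimates -/

section analysis
variable {d : ℕ} {U : EuclideanSpace ℝ (Fin d) → ℝ} {L m K : ℝ}

lemma fderiv_apply_eq_inner' (U : EuclideanSpace ℝ (Fin d) → ℝ) (x y : EuclideanSpace ℝ (Fin d)) :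
    ⟪gradient U x, y⟫ = fderiv ℝ U x y := by
  rw [gradient, InnerProductSpace.toDual_symm_apply]

lemma norm_gradient_eq' (U : EuclideanSpace ℝ (Fin d) → ℝ) (x : EuclideanSpace ℝ (Fin d)) :
    ‖gradient U x‖ = ‖fderiv ℝ U x‖ := by
  rw [gradient, LinearIsometryEquiv.norm_map]

lemma hasFDerivAt_fderiv' (hU : ContDiff ℝ 2 U) (x : EuclideanSpace ℝ (Fin d)) :
    HasFDerivAt (fderiv ℝ U) (fderiv ℝ (fderiv ℝ U) x) x := by
  have h : ContDiff ℝ 1 (fderiv ℝ U) := hU.fderiv_right (m := 1) (by norm_num)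
  exact (h.differentiable one_ne_zero x).hasFDerivAt

lemma bilinear_eq' (U : EuclideanSpace ℝ (Fin d) → ℝ) (x u w : EuclideanSpace ℝ (Fin d)) :
    fderiv ℝ (fderiv ℝ U) x u w = iteratedFDeriv ℝ 2 U x ![u, w] := by
  rw [iteratedFDeriv_two_apply]
  simp

lemma bilinear_bound' (hHess : ∀ x, ‖iteratedFDeriv ℝ 2 U x‖ ≤ L)
    (x u w : EuclideanSpace ℝ (Fin d)) :
    |fderiv ℝ (fderiv ℝ U) x u w| ≤ L * ‖u‖ * ‖w‖ := by
  rw [bilinear_eq']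
  calc |iteratedFDeriv ℝ 2 U x ![u, w]| = ‖iteratedFDeriv ℝ 2 U x ![u, w]‖ := rfl
    _ ≤ ‖iteratedFDeriv ℝ 2 U x‖ * ∏ i, ‖(![u, w]) i‖ :=
        (iteratedFDeriv ℝ 2 U x).le_opNorm _
    _ ≤ L * (‖u‖ * ‖w‖) := by
        rw [Fin.prod_univ_two]
        simp only [Matrix.cons_val_zero, Matrix.cons_val_one, Matrix.head_cons]
        exact mul_le_mul_of_nonneg_right (hHess x) (by positivity)
    _ = L * ‖u‖ * ‖w‖ := by ring

lemma second_deriv_opnorm' (hm : 0 < m) (hmL : m ≤ L)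
    (hHess : ∀ x, ‖iteratedFDeriv ℝ 2 U x‖ ≤ L) (x : EuclideanSpace ℝ (Fin d)) :
    ‖fderiv ℝ (fderiv ℝ U) x‖ ≤ L := by
  have hL : (0:ℝ) ≤ L := le_trans hm.le hmL
  refine ContinuousLinearMap.opNorm_le_bound _ hL fun u => ?_
  refine ContinuousLinearMap.opNorm_le_bound _ (by positivity) fun w => ?_
  have := bilinear_bound' hHess x u w
  rw [Real.norm_eq_abs]
  linarith [this]

lemma norm_gradient_le' (hm : 0 < m) (hmL : m ≤ L) (hU : ContDiff ℝ 2 U)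
    (hgrad0 : gradient U 0 = 0) (hHess : ∀ x, ‖iteratedFDeriv ℝ 2 U x‖ ≤ L)
    (x : EuclideanSpace ℝ (Fin d)) : ‖gradient U x‖ ≤ L * ‖x‖ := by
  have h0 : fderiv ℝ U 0 = 0 := by
    have := congrArg (InnerProductSpace.toDual ℝ (EuclideanSpace ℝ (Fin d))) hgrad0
    simpa [gradient] using this
  have key : ‖fderiv ℝ U x - fderiv ℝ U 0‖ ≤ L * ‖x - 0‖ := by
    refine (convex_univ : Convex ℝ (Set.univ : Set (EuclideanSpace ℝ (Fin d)))).norm_image_sub_le_of_norm_hasFDerivWithin_le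
      (fun y _ => (hasFDerivAt_fderiv' hU y).hasFDerivWithinAt)
      (fun y _ => second_deriv_opnorm' hm hmL hHess y) trivial trivial
  rw [norm_gradient_eq']
  simpa [h0] using key

lemma hasDerivAt_line' (hU : ContDiff ℝ 2 U) (x : EuclideanSpace ℝ (Fin d)) (t : ℝ) :
    HasDerivAt (fun s : ℝ => fderiv ℝ U (s • x) x)
      (iteratedFDeriv ℝ 2 U (t • x) ![x, x]) t := by
  have h1 : HasDerivAt (fun s : ℝ => s • x) x t := by
    simpa using (hasDerivAt_id t).smul_const x
  have h3 : HasDerivAt (fun s : ℝ => fderiv ℝ U (s • x))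
      (fderiv ℝ (fderiv ℝ U) (t • x) x) t :=
    (hasFDerivAt_fderiv' hU (t • x)).comp_hasDerivAt t h1
  have h4 := h3.clm_apply (hasDerivAt_const t x)
  simp only [map_zero, add_zero] at h4
  rw [← bilinear_eq']
  simpa using h4

lemma inner_gradient_ge' (hm : 0 < m) (hmL : m ≤ L) (hK : 0 ≤ K)
    (hU : ContDiff ℝ 2 U) (hgrad0 : gradient U 0 = 0)
    (hHess : ∀ x, ‖iteratedFDeriv ℝ 2 U x‖ ≤ L)
    (hconv : ∀ x y : EuclideanSpace ℝ (Fin d), K ≤ ‖x‖ → ‖y‖ = 1 →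
      m ≤ iteratedFDeriv ℝ 2 U x ![y, y])
    (x : EuclideanSpace ℝ (Fin d)) (hx : 2 * K * (1 + L / m) ≤ ‖x‖) :
    m / 2 * ‖x‖ ^ 2 ≤ ⟪gradient U x, x⟫ := by
  rcases eq_or_ne x 0 with rfl | hx0
  · simp
  have hxpos : 0 < ‖x‖ := norm_pos_iff.mpr hx0
  have hKx : K ≤ ‖x‖ := by
    have h1 : (1:ℝ) ≤ 1 + L / m := by
      have : 0 ≤ L / m := div_nonneg (le_trans hm.le hmL) hm.le
      linarith
    nlinarith
  set g : ℝ → ℝ := fun s => fderiv ℝ U (s • x) x with hg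
  have hgd : ∀ t, HasDerivAt g (iteratedFDeriv ℝ 2 U (t • x) ![x, x]) t :=
    hasDerivAt_line' hU x
  have hdiff : Differentiable ℝ g := fun t => (hgd t).differentiableAt
  have hderiv : ∀ t : ℝ, deriv g t = iteratedFDeriv ℝ 2 U (t • x) ![x, x] :=
    fun t => (hgd t).deriv
  set s : ℝ := K / ‖x‖ with hs
  have hs0 : 0 ≤ s := div_nonneg hK hxpos.le
  have hs1 : s ≤ 1 := (div_le_one hxpos).mpr hKx
  have hA : m * ‖x‖ ^ 2 * (1 - s) ≤ g 1 - g s := by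
    refine Convex.mul_sub_le_image_sub_of_le_deriv (convex_Icc s 1)
      hdiff.continuous.continuousOn (hdiff.differentiableOn) ?_ s ?_ 1 ?_ hs1
    · intro t ht
      rw [interior_Icc] at ht
      have ht0 : 0 ≤ t := le_trans hs0 ht.1.le
      have htK : K ≤ ‖t • x‖ := by
        rw [norm_smul, Real.norm_eq_abs, abs_of_nonneg ht0]
        calc K = s * ‖x‖ := by rw [hs]; field_simp
        _ ≤ t * ‖x‖ := mul_le_mul_of_nonneg_right ht.1.le hxpos.le
      rw [hderiv]
      set y : EuclideanSpace ℝ (Fin d) := ‖x‖⁻¹ • x with hy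
      have hy1 : ‖y‖ = 1 := by
        rw [hy, norm_smul, Real.norm_eq_abs, abs_of_nonneg (inv_nonneg.mpr hxpos.le)]
        field_simp
      have hscale : iteratedFDeriv ℝ 2 U (t • x) ![x, x]
          = ‖x‖ ^ 2 * iteratedFDeriv ℝ 2 U (t • x) ![y, y] := by
        have hxy : ![x, x] = fun i => ‖x‖ • (![y, y] i) := by
          funext i
          fin_cases i <;>
            simp [hy, smul_smul, mul_inv_cancel₀ hxpos.ne']
        rw [hxy, (iteratedFDeriv ℝ 2 U (t • x)).map_smul_univ (fun _ => ‖x‖) ![y, y]]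
        simp [Fin.prod_univ_two, sq, smul_eq_mul]
      rw [hscale]
      have := hconv (t • x) y htK hy1
      nlinarith [sq_nonneg ‖x‖]
    · exact ⟨le_rfl, hs1⟩
    · exact ⟨hs1, le_rfl⟩
  have hB : -(L * ‖x‖ ^ 2) * (s - 0) ≤ g s - g 0 := by
    refine Convex.mul_sub_le_image_sub_of_le_deriv (convex_Icc 0 s)
      hdiff.continuous.continuousOn (hdiff.differentiableOn) ?_ 0 ?_ s ?_ hs0
    · intro t _
      rw [hderiv, ← bilinear_eq']
      have h := bilinear_bound' hHess (t • x) x x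
      have := neg_abs_le (fderiv ℝ (fderiv ℝ U) (t • x) x x)
      nlinarith
    · exact ⟨le_rfl, hs0⟩
    · exact ⟨hs0, le_rfl⟩
  have hg1 : g 1 = ⟪gradient U x, x⟫ := by
    simp only [hg, one_smul]
    exact (fderiv_apply_eq_inner' U x x).symm
  have hg0 : g 0 = 0 := by
    show fderiv ℝ U ((0:ℝ) • x) x = 0
    rw [zero_smul, ← fderiv_apply_eq_inner', hgrad0]
    simp
  rw [hg1] at hA
  rw [hg0] at hB
  have hsx : s * ‖x‖ = K := by rw [hs]; field_simp
  have hbound : m * ‖x‖ ^ 2 - (m + L) * K * ‖x‖ ≤ ⟪gradient U x, x⟫ := by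
    have e2 : m * ‖x‖ ^ 2 - (m + L) * K * ‖x‖
        = m * ‖x‖ ^ 2 * (1 - s) - L * ‖x‖ ^ 2 * s := by rw [← hsx]; ring
    linarith [hA, hB]
  have hfin : m / 2 * ‖x‖ ^ 2 ≤ m * ‖x‖ ^ 2 - (m + L) * K * ‖x‖ := by
    have hKm : 2 * K * (1 + L / m) = 2 * K * (m + L) / m := by field_simp
    rw [hKm] at hx
    have hmne : m ≠ 0 := hm.ne'
    have h2 : (m + L) * K ≤ m / 2 * ‖x‖ := by
      calc (m + L) * K = m / 2 * (2 * K * (m + L) / m) := by field_simp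
      _ ≤ m / 2 * ‖x‖ := mul_le_mul_of_nonneg_left hx (by positivity)
    nlinarith
  linarith

end analysis

set_option maxHeartbeats 1000000 in
/-- Second-moment drift for ULA: for `γ̄ ∈ (0, m/(4L²)]`, `γ ∈ (0, γ̄]` and all `x`,
`∫ ‖y‖² Q_γ(x,dy) ≤ (1 − mγ/2)‖x‖² + γ b̃`, where `Q_γ(x,·)` is the law of
`x − γ∇U(x) + √(2γ)Z`, `K̂ = max(2K(1+L/m), 2√(2d/m))` and
`b̃ = 2d + K̂²(γ̄L² + 2L + m/2)`. -/
theorem ula_second_moment_drift {d : ℕ} (U : EuclideanSpace ℝ (Fin d) → ℝ)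
    (L m K γbar γ : ℝ) (hm : 0 < m) (hmL : m ≤ L) (hK : 0 ≤ K)
    (hU : ContDiff ℝ 2 U) (hgrad0 : gradient U 0 = 0)
    (hHess : ∀ x, ‖iteratedFDeriv ℝ 2 U x‖ ≤ L)
    (hconv : ∀ x y : EuclideanSpace ℝ (Fin d), K ≤ ‖x‖ → ‖y‖ = 1 →
      m ≤ iteratedFDeriv ℝ 2 U x ![y, y])
    (hγbar : γbar ∈ Set.Ioc 0 (m / (4 * L ^ 2))) (hγ : γ ∈ Set.Ioc 0 γbar) :
    ∀ x : EuclideanSpace ℝ (Fin d),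
      ∫ z, ‖x - γ • gradient U x + Real.sqrt (2 * γ) • z‖ ^ 2 ∂(stdGaussian d) ≤
        (1 - m * γ / 2) * ‖x‖ ^ 2 +
          γ * (2 * d + (max (2 * K * (1 + L / m)) (2 * Real.sqrt (2 * d / m))) ^ 2 *
            (γbar * L ^ 2 + 2 * L + m / 2)) := by
  intro x
  have hγ0 : 0 < γ := hγ.1
  have hγbar0 : 0 < γbar := hγbar.1
  have hL0 : 0 < L := lt_of_lt_of_le hm hmL
  set G : EuclideanSpace ℝ (Fin d) := gradient U x with hG
  set Khat : ℝ := max (2 * K * (1 + L / m)) (2 * Real.sqrt (2 * d / m)) with hKhat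
  rw [integral_norm_add_smul' d (x - γ • G) (Real.sqrt (2 * γ)),
    Real.sq_sqrt (by positivity : (0:ℝ) ≤ 2 * γ)]
  have hnorm : ‖x - γ • G‖ ^ 2 = ‖x‖ ^ 2 - 2 * γ * ⟪G, x⟫ + γ ^ 2 * ‖G‖ ^ 2 := by
    rw [norm_sub_sq_real, real_inner_smul_right, norm_smul]
    rw [real_inner_comm]
    rw [mul_pow, Real.norm_eq_abs, sq_abs]
    ring
  have hGb : ‖G‖ ≤ L * ‖x‖ := norm_gradient_le' hm hmL hU hgrad0 hHess x
  have hG2 : ‖G‖ ^ 2 ≤ L ^ 2 * ‖x‖ ^ 2 := by nlinarith [norm_nonneg G, norm_nonneg x]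
  have hγbarL : γbar * L ^ 2 ≤ m / 4 := by
    have h1 := (le_div_iff₀ (by positivity : (0:ℝ) < 4 * L ^ 2)).mp hγbar.2
    nlinarith
  have hγL : γ * L ^ 2 ≤ m / 4 := by
    have : γ * L ^ 2 ≤ γbar * L ^ 2 := mul_le_mul_of_nonneg_right hγ.2 (sq_nonneg L)
    linarith
  have hcoefpos : 0 ≤ γbar * L ^ 2 + 2 * L + m / 2 := by
    have := mul_nonneg hγbar0.le (sq_nonneg L)
    linarith
  have hA0 : 0 ≤ Khat ^ 2 * (γbar * L ^ 2 + 2 * L + m / 2) :=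
    mul_nonneg (sq_nonneg Khat) hcoefpos
  rcases le_or_gt Khat ‖x‖ with hcase | hcase
  · -- large ‖x‖
    have hinner : m / 2 * ‖x‖ ^ 2 ≤ ⟪G, x⟫ :=
      inner_gradient_ge' hm hmL hK hU hgrad0 hHess hconv x
        (le_trans (le_max_left _ _) hcase)
    rw [hnorm]
    have h8 : (2 * γ) * (m / 2 * ‖x‖ ^ 2) ≤ (2 * γ) * ⟪G, x⟫ :=
      mul_le_mul_of_nonneg_left hinner (by positivity)
    have h9 : γ ^ 2 * ‖G‖ ^ 2 ≤ γ * (m / 4) * ‖x‖ ^ 2 := by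
      have t1 := mul_le_mul_of_nonneg_left hG2 (sq_nonneg γ)
      have t2 := mul_le_mul_of_nonneg_right hγL
        (mul_nonneg hγ0.le (sq_nonneg ‖x‖))
      nlinarith
    have h10 : 0 ≤ γ * (Khat ^ 2 * (γbar * L ^ 2 + 2 * L + m / 2)) :=
      mul_nonneg hγ0.le hA0
    have h11 : 0 ≤ m * γ * ‖x‖ ^ 2 := by positivity
    linarith [h8, h9, h10, h11]
  · -- small ‖x‖
    have habs : |⟪G, x⟫| ≤ L * ‖x‖ ^ 2 :=
      calc |⟪G, x⟫| ≤ ‖G‖ * ‖x‖ := abs_real_inner_le_norm G x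
        _ ≤ L * ‖x‖ * ‖x‖ := mul_le_mul_of_nonneg_right hGb (norm_nonneg x)
        _ = L * ‖x‖ ^ 2 := by ring
    have hx2 : ‖x‖ ^ 2 ≤ Khat ^ 2 := pow_le_pow_left₀ (norm_nonneg x) hcase.le 2
    have hcoef : ‖x‖ ^ 2 * (γbar * L ^ 2 + 2 * L + m / 2)
        ≤ Khat ^ 2 * (γbar * L ^ 2 + 2 * L + m / 2) :=
      mul_le_mul_of_nonneg_right hx2 hcoefpos
    rw [hnorm]
    have h5 : γ * (‖x‖ ^ 2 * (γbar * L ^ 2 + 2 * L + m / 2))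
        ≤ γ * (Khat ^ 2 * (γbar * L ^ 2 + 2 * L + m / 2)) :=
      mul_le_mul_of_nonneg_left hcoef hγ0.le
    have h6 : (2 * γ) * (-(L * ‖x‖ ^ 2)) ≤ (2 * γ) * ⟪G, x⟫ :=
      mul_le_mul_of_nonneg_left (abs_le.mp habs).1 (by positivity)
    have h7b : γ ^ 2 ≤ γ * γbar := by nlinarith [hγ.2, hγ0]
    have h7 : γ ^ 2 * ‖G‖ ^ 2 ≤ γ * γbar * (L ^ 2 * ‖x‖ ^ 2) := by
      have t1 := mul_le_mul_of_nonneg_left hG2 (sq_nonneg γ)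
      have t2 := mul_le_mul_of_nonneg_right h7b
        (mul_nonneg (sq_nonneg L) (sq_nonneg ‖x‖))
      nlinarith
    linarith [h5, h6, h7, hA0, hγ0.le]
end
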